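/- arXiv:1907.01464 — 5 statements merged into one kernel-verified Lean document; each statement's English description precedes it below -/
import Mathlib

section
/- Let (x(n)) be an increasing sequence of positive real numbers and y(n) = ∑_{i=0}^n x(i). Then lim_{n→∞} y(n+1)/y(n) = γ > 1 holds if and only if lim_{n→∞} y(n)/x(n) = γ/(γ−1). -/
open Filter Topology

/-- For an increasing sequence `x` of positive reals with partial sums
`y n = ∑_{i=0}^n x i` and a real `γ > 1`:
`y (n+1) / y n → γ` if and only if `y n / x n → γ / (γ - 1)`. -/
theorem carry_stmt1 (x : ℕ → ℝ) (hpos : ∀ n, 0 < x n) (hmono : Monotone x)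
    (γ : ℝ) (hγ : 1 < γ) :
    Tendsto
        (fun n => (∑ i ∈ Finset.range (n + 2), x i) / (∑ i ∈ Finset.range (n + 1), x i))
        atTop (nhds γ) ↔
      Tendsto (fun n => (∑ i ∈ Finset.range (n + 1), x i) / x n) atTop
        (nhds (γ / (γ - 1))) := by
  set y : ℕ → ℝ := fun n => ∑ i ∈ Finset.range (n + 1), x i with hy
  have hypos : ∀ n, 0 < y n := fun n =>
    Finset.sum_pos (fun i _ => hpos i) ⟨0, Finset.mem_range.2 (Nat.succ_pos n)⟩
  set r : ℕ → ℝ := fun n => x (n + 1) / y n with hr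
  have hrpos : ∀ n, 0 < r n := fun n => div_pos (hpos _) (hypos n)
  have hsucc : ∀ n : ℕ, y (n + 1) = y n + x (n + 1) := fun n => by
    simp [hy, Finset.sum_range_succ]
  have hA : (fun n => (∑ i ∈ Finset.range (n + 2), x i) / (∑ i ∈ Finset.range (n + 1), x i))
      = fun n => 1 + r n := by
    funext n
    have : (∑ i ∈ Finset.range (n + 2), x i) = y n + x (n + 1) := hsucc n
    rw [show n + 2 = n + 1 + 1 from rfl] at this ⊢
    rw [this]
    show (y n + x (n + 1)) / y n = 1 + r n
    rw [add_div, div_self (hypos n).ne']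
  have hB : (fun n => y (n + 1) / x (n + 1)) = fun n => (r n)⁻¹ + 1 := by
    funext n
    rw [hsucc n, add_div, div_self (hpos _).ne', hr, inv_div]
  have hγne : γ - 1 ≠ 0 := sub_ne_zero.2 (ne_of_gt hγ)
  constructor
  · intro h
    rw [hA] at h
    have hr_lim : Tendsto r atTop (nhds (γ - 1)) := by
      have := h.sub_const 1
      simpa [add_sub_cancel_left] using this
    have hinv : Tendsto (fun n => (r n)⁻¹) atTop (nhds (γ - 1)⁻¹) := hr_lim.inv₀ hγne
    have hshift : Tendsto (fun n => y (n + 1) / x (n + 1)) atTop (nhds (γ / (γ - 1))) := by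
      rw [hB]
      have := hinv.add_const 1
      convert this using 2
      field_simp
      ring
    exact (tendsto_add_atTop_iff_nat 1).1 hshift
  · intro h
    have hshift : Tendsto (fun n => y (n + 1) / x (n + 1)) atTop (nhds (γ / (γ - 1))) :=
      (tendsto_add_atTop_iff_nat 1).2 h
    rw [hB] at hshift
    have hinv : Tendsto (fun n => (r n)⁻¹) atTop (nhds (γ - 1)⁻¹) := by
      have := hshift.sub_const 1
      have heq : γ / (γ - 1) - 1 = (γ - 1)⁻¹ := by field_simp; ring
      simpa [add_sub_cancel_right, heq] using this
    have hr_lim : Tendsto r atTop (nhds (γ - 1)) := by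
      have h2 : Tendsto (fun n => ((r n)⁻¹)⁻¹) atTop (nhds ((γ - 1)⁻¹)⁻¹) :=
        hinv.inv₀ (inv_ne_zero hγne)
      rw [inv_inv] at h2
      exact h2.congr fun n => inv_inv (r n)
    rw [hA]
    have := hr_lim.const_add 1
    simpa [add_sub_cancel] using this
end

section
/- Let L ⊆ A^* be a prefix-closed and right-extendable (PCE) language over a totally ordered finite alphabet. Then for every ℓ ≥ 0, the sum of the carry propagations cp_L(w) over all words w of L of length ℓ equals v_L(ℓ), the number of words of L of length at most ℓ. -/
open Filter Topology

/-- Length of the longest common prefix of two words. -/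
def lcpLen {A : Type*} [DecidableEq A] : List A → List A → ℕ
  | a :: u, b :: v => if a = b then lcpLen u v + 1 else 0
  | _, _ => 0

/-- `Delta u v`: if `|u| = |v|`, the length of `u` minus the length of the longest
common prefix of `u` and `v`; otherwise `max |u| |v|` (padding convention). -/
def Delta {A : Type*} [DecidableEq A] (u v : List A) : ℕ :=
  if u.length = v.length then u.length - lcpLen u v else max u.length v.length

/-- Radix (genealogical) order: shorter words first, words of equal length
compared lexicographically. -/
def RadixLt {A : Type*} [LT A] (u v : List A) : Prop :=
  u.length < v.length ∨ (u.length = v.length ∧ List.Lex (· < ·) u v)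

/-- A language is PCE if it is prefix-closed and right-extendable. -/
def PCE {A : Type*} (L : Set (List A)) : Prop :=
  (∀ w ∈ L, ∀ u, u <+: w → u ∈ L) ∧ (∀ w ∈ L, ∃ v ∈ L, w <+: v ∧ w ≠ v)

/-- `rep` enumerates `L` in radix order: it is a bijection from `ℕ` onto `L`
which is strictly increasing for the radix order, so `rep n` is the `(n+1)`-th
word of `L` (the `L`-representation of `n`). -/
def RadixEnum {A : Type*} [LT A] (L : Set (List A)) (rep : ℕ → List A) : Prop :=
  Set.BijOn rep Set.univ L ∧ ∀ m n : ℕ, m < n → RadixLt (rep m) (rep n)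

/-- Number of words of `L` of length `ℓ`. -/
noncomputable def uCount {A : Type*} (L : Set (List A)) (ℓ : ℕ) : ℕ :=
  {w ∈ L | w.length = ℓ}.ncard

/-- Number of words of `L` of length at most `ℓ`. -/
noncomputable def vCount {A : Type*} (L : Set (List A)) (ℓ : ℕ) : ℕ :=
  {w ∈ L | w.length ≤ ℓ}.ncard

/-- The left bank of a word `v`: words of `L` of length at most `|v|` that are
lexicographically smaller than `v`, excluding the prefixes of `v`. -/
def leftBank {A : Type*} [LT A] (L : Set (List A)) (v : List A) : Set (List A) :=
  {w ∈ L | w.length ≤ v.length ∧ List.Lex (· < ·) w v} \ {w | w <+: v}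

set_option linter.unusedSectionVars false

section ListAux
variable {A : Type*} [LinearOrder A]

lemma lcpLen_nil_left [DecidableEq A] (v : List A) : lcpLen ([] : List A) v = 0 := by
  cases v <;> rfl

lemma lcpLen_cons_cons [DecidableEq A] (a b : A) (u v : List A) :
    lcpLen (a :: u) (b :: v) = if a = b then lcpLen u v + 1 else 0 := rfl

lemma take_lcpLen [DecidableEq A] : ∀ u v : List A, u.take (lcpLen u v) = v.take (lcpLen u v)
  | [], v => by simp [lcpLen_nil_left]
  | a :: u, [] => by simp [lcpLen]
  | a :: u, b :: v => by
    by_cases h : a = b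
    · subst h
      simp [lcpLen_cons_cons, take_lcpLen u v]
    · simp [lcpLen_cons_cons, h]

lemma lcpLen_le_left [DecidableEq A] : ∀ u v : List A, lcpLen u v ≤ u.length
  | [], v => by simp [lcpLen_nil_left]
  | a :: u, [] => by simp [lcpLen]
  | a :: u, b :: v => by
    by_cases h : a = b <;> simp [lcpLen_cons_cons, h]
    exact lcpLen_le_left u v

lemma lex_of_prefix_ne : ∀ {u w : List A}, u <+: w → u ≠ w → List.Lex (· < ·) u w
  | [], [], _, h => absurd rfl h
  | [], _ :: _, _, _ => List.Lex.nil
  | a :: u, [], h, _ => by simp at h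
  | a :: u, b :: w, h, hne => by
    obtain ⟨rfl, h2⟩ := List.cons_prefix_cons.mp h
    exact List.Lex.cons (lex_of_prefix_ne h2 (by rintro rfl; exact hne rfl))

lemma lex_ext_left : ∀ (u w w'' : List A), List.Lex (· < ·) u w → ¬ u <+: w → u <+: w'' →
    List.Lex (· < ·) w'' w
  | [], w, _, _, hnp, _ => absurd (List.nil_prefix) hnp
  | a :: u, w, w'', h, hnp, hp => by
    obtain ⟨w₂, rfl, hp2⟩ : ∃ w₂, w'' = a :: w₂ ∧ u <+: w₂ := by
      cases w'' with
      | nil => simp at hp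
      | cons c w₂ =>
        obtain ⟨rfl, h2⟩ := List.cons_prefix_cons.mp hp
        exact ⟨w₂, rfl, h2⟩
    cases h with
    | rel hab => exact List.Lex.rel hab
    | cons h' =>
      exact List.Lex.cons (lex_ext_left u _ w₂ h'
        (fun hc => hnp (List.cons_prefix_cons.mpr ⟨rfl, hc⟩)) hp2)

lemma lex_ext_right : ∀ (w u w'' : List A), List.Lex (· < ·) w u → u <+: w'' →
    List.Lex (· < ·) w w''
  | [], [], _, h, _ => by cases h
  | _ :: _, [], _, h, _ => by cases h
  | w, b :: u, w'', h, hp => by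
    obtain ⟨w₂, rfl, hp2⟩ : ∃ w₂, w'' = b :: w₂ ∧ u <+: w₂ := by
      cases w'' with
      | nil => simp at hp
      | cons c w₂ =>
        obtain ⟨rfl, h2⟩ := List.cons_prefix_cons.mp hp
        exact ⟨w₂, rfl, h2⟩
    cases h with
    | nil => exact List.Lex.nil
    | rel hab => exact List.Lex.rel hab
    | cons h' => exact List.Lex.cons (lex_ext_right _ u w₂ h' hp2)

lemma lex_take_lcp : ∀ (w v : List A) (m : ℕ), List.Lex (· < ·) w v → w.length = v.length →
    lcpLen w v < m → List.Lex (· < ·) w (v.take m) ∧ ¬ (v.take m <+: w)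
  | [], [], _, h, _, _ => by cases h
  | [], _ :: _, _, _, hlen, _ => by simp at hlen
  | _ :: _, [], _, h, _, _ => by cases h
  | a :: w, b :: v, m, h, hlen, hm => by
    obtain ⟨m, rfl⟩ : ∃ m', m = m' + 1 := ⟨m - 1, by omega⟩
    rw [List.take_succ_cons]
    cases h with
    | rel hab =>
      exact ⟨List.Lex.rel hab,
        fun hpre => (ne_of_lt hab) ((List.cons_prefix_cons.mp hpre).1.symm)⟩
    | cons h' =>
      have hl : lcpLen (a :: w) (a :: v) = lcpLen w v + 1 := by
        simp [lcpLen_cons_cons]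
      have ih := lex_take_lcp w v m h' (by simpa using hlen) (by omega)
      exact ⟨List.Lex.cons ih.1, fun hpre => ih.2 (List.cons_prefix_cons.mp hpre).2⟩

lemma lex_trichotomy (u v : List A) :
    List.Lex (· < ·) u v ∨ u = v ∨ List.Lex (· < ·) v u :=
  trichotomous_of (List.Lex (· < ·)) u v

lemma lex_trans {u v w : List A} (h1 : List.Lex (· < ·) u v) (h2 : List.Lex (· < ·) v w) :
    List.Lex (· < ·) u w := List.lex_trans (fun h1 h2 => lt_trans h1 h2) h1 h2

lemma lex_asymm {u v : List A} (h1 : List.Lex (· < ·) u v) (h2 : List.Lex (· < ·) v u) :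
    False := asymm_of (List.Lex (· < ·)) h1 h2

lemma lex_irrefl {u : List A} (h1 : List.Lex (· < ·) u u) : False :=
  irrefl_of (List.Lex (· < ·)) u h1


/-- A finite nonempty set of words has a lexicographic minimum. -/
lemma exists_lex_min (t : Set (List A)) (ht : t.Finite) (hne : t.Nonempty) :
    ∃ w ∈ t, ∀ v ∈ t, v = w ∨ List.Lex (· < ·) w v := by
  revert hne
  refine Set.Finite.induction_on t ht ?_ ?_
  · intro hne; exact absurd hne (by simp)
  · rintro a s ha hs ih -
    rcases s.eq_empty_or_nonempty with rfl | hs'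
    · exact ⟨a, by simp, by simp⟩
    · obtain ⟨m, hm, hmin⟩ := ih hs'
      rcases lex_trichotomy a m with h | h | h
      · refine ⟨a, Set.mem_insert _ _, ?_⟩
        rintro v (rfl | hv)
        · exact Or.inl rfl
        · rcases hmin v hv with rfl | h2
          · exact Or.inr h
          · exact Or.inr (lex_trans h h2)
      · subst h
        refine ⟨a, Set.mem_insert _ _, ?_⟩
        rintro v (rfl | hv)
        · exact Or.inl rfl
        · exact hmin v hv
      · refine ⟨m, Set.mem_insert_of_mem _ hm, ?_⟩
        rintro v (rfl | hv)
        · exact Or.inr h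
        · exact hmin v hv


end ListAux

/-- For a PCE language `L` (with radix-order successor function `succ` on `L`),
for every `ℓ` the sum of the carry propagations `Δ(w, succ w)` over all words
`w ∈ L` of length `ℓ` equals the number of words of `L` of length at most `ℓ`. -/
theorem carry_stmt6 {A : Type*} [Fintype A] [LinearOrder A]
    (L : Set (List A)) (hL : PCE L)
    (succ : List A → List A)
    (hsucc : ∀ w ∈ L, succ w ∈ L ∧ RadixLt w (succ w) ∧
      ∀ v ∈ L, RadixLt w v → succ w = v ∨ RadixLt (succ w) v)
    (ℓ : ℕ) :
    ∑ᶠ w ∈ {w ∈ L | w.length = ℓ}, Delta w (succ w) = vCount L ℓ := by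
  classical
  obtain ⟨hP, hE⟩ := hL
  rcases Set.eq_empty_or_nonempty L with rfl | ⟨w₀', hw₀'⟩
  · simp [vCount]
  -- every word of L extends to arbitrary greater lengths within L
  have hext : ∀ u ∈ L, ∀ k : ℕ, ∃ w, w ∈ L ∧ u <+: w ∧ w.length = u.length + k := by
    intro u hu k
    induction k with
    | zero => exact ⟨u, hu, List.prefix_refl u, rfl⟩
    | succ k ih =>
      obtain ⟨w, hw, hpre, hlen⟩ := ih
      obtain ⟨v, hv, hwv, hne⟩ := hE w hw
      have hlt : w.length < v.length :=
        lt_of_le_of_ne hwv.length_le (fun h => hne (hwv.eq_of_length h))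
      refine ⟨v.take (u.length + k + 1), hP v hv _ (List.take_prefix _ _), ?_, ?_⟩
      · rw [List.prefix_take_iff]
        exact ⟨hpre.trans hwv, by omega⟩
      · rw [List.length_take]; omega
  have hnil : ([] : List A) ∈ L := hP _ hw₀' [] List.nil_prefix
  have hlenex : ∀ n : ℕ, ∃ w, w ∈ L ∧ w.length = n := by
    intro n
    obtain ⟨w, h1, _, h3⟩ := hext [] hnil n
    exact ⟨w, h1, by simpa using h3⟩
  set S : Set (List A) := {w ∈ L | w.length = ℓ} with hSdef
  have hSfin : S.Finite := (List.finite_length_eq A ℓ).subset (fun w hw => hw.2)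
  have hVfin : {u ∈ L | u.length ≤ ℓ}.Finite :=
    (List.finite_length_le A ℓ).subset (fun w hw => hw.2)
  have hextS : ∀ u ∈ L, u.length ≤ ℓ → ∃ w, w ∈ S ∧ u <+: w := by
    intro u hu hle
    obtain ⟨w, h1, h2, h3⟩ := hext u hu (ℓ - u.length)
    exact ⟨w, ⟨h1, by omega⟩, h2⟩
  set B : List A → Set (List A) :=
    fun w => {u ∈ L | u.length ≤ ℓ ∧ (u <+: w ∨ List.Lex (· < ·) u w)} with hBdef
  have hBfin : ∀ w, (B w).Finite := fun w => hVfin.subset (fun u hu => ⟨hu.1, hu.2.1⟩)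
  -- the step lemma: if w ∈ S is not lex-maximal in S then succ w is in S and is the lex
  -- successor of w within S
  have hstep : ∀ w, w ∈ S → (∃ v ∈ S, List.Lex (· < ·) w v) →
      succ w ∈ S ∧ List.Lex (· < ·) w (succ w) ∧
      (∀ v ∈ S, List.Lex (· < ·) w v → v = succ w ∨ List.Lex (· < ·) (succ w) v) := by
    intro w hw ⟨v, hv, hlexv⟩
    obtain ⟨h1, h2, h3⟩ := hsucc w hw.1
    have hrv : RadixLt w v := Or.inr ⟨by rw [hw.2, hv.2], hlexv⟩
    have hkey : (succ w).length = w.length ∧ List.Lex (· < ·) w (succ w) := by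
      rcases h2 with h2 | h2
      · exfalso
        rcases h3 v hv.1 hrv with heq | h4
        · have hl5 := congrArg List.length heq
          have := hv.2; have := hw.2; omega
        · rcases h4 with h4 | ⟨h4, _⟩ <;>
          · have := hv.2; have := hw.2; omega
      · exact ⟨h2.1.symm, h2.2⟩
    refine ⟨⟨h1, by rw [hkey.1, hw.2]⟩, hkey.2, ?_⟩
    intro v' hv' hlex'
    rcases h3 v' hv'.1 (Or.inr ⟨by rw [hw.2, hv'.2], hlex'⟩) with heq | h4
    · exact Or.inl heq.symm
    · rcases h4 with h4 | ⟨_, h4⟩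
      · exfalso; have := hv'.2; have := hw.2; have := hkey.1; omega
      · exact Or.inr h4
  -- the diff lemma
  have hdiff : ∀ w, w ∈ S → (∃ v ∈ S, List.Lex (· < ·) w v) →
      (B (succ w)).ncard = (B w).ncard + Delta w (succ w) := by
    intro w hw hex
    obtain ⟨hsw, hlexw, hmin⟩ := hstep w hw hex
    set sw := succ w with hswdef
    have hlen : w.length = sw.length := by rw [hw.2, hsw.2]
    set lcp := lcpLen w sw with hlcpdef
    have hlcple : lcp ≤ ℓ := by
      have := lcpLen_le_left w sw; rw [← hw.2]; exact this
    -- B w ⊆ B sw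
    have hsub : B w ⊆ B sw := by
      rintro u ⟨hu, hule, hor⟩
      refine ⟨hu, hule, Or.inr ?_⟩
      rcases hor with hpre | hlex
      · rcases eq_or_ne u w with rfl | hne
        · exact hlexw
        · exact lex_trans (lex_of_prefix_ne hpre hne) hlexw
      · exact lex_trans hlex hlexw
    -- the difference is the set of prefixes of sw of length in (lcp, ℓ]
    have hdiffeq : B sw \ B w = (fun m => sw.take m) '' Set.Ioc lcp ℓ := by
      ext u
      constructor
      · rintro ⟨⟨hu, hule, hor⟩, hnb⟩
        have hnor : ¬ (u <+: w ∨ List.Lex (· < ·) u w) := fun hc => hnb ⟨hu, hule, hc⟩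
        have hnp : ¬ u <+: w := fun hc => hnor (Or.inl hc)
        have hnl : ¬ List.Lex (· < ·) u w := fun hc => hnor (Or.inr hc)
        by_cases hup : u <+: sw
        · have hueq : u = sw.take u.length := List.prefix_iff_eq_take.mp hup
          refine ⟨u.length, ⟨?_, hule⟩, hueq.symm⟩
          by_contra hcon
          push_neg at hcon
          have h6 : sw.take u.length = w.take u.length := by
            calc sw.take u.length = (sw.take lcp).take u.length := by
                  rw [List.take_take, min_eq_left hcon]
              _ = (w.take lcp).take u.length := by rw [← take_lcpLen w sw]
              _ = w.take u.length := by rw [List.take_take, min_eq_left hcon]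
          exact hnp (List.prefix_iff_eq_take.mpr (hueq.trans h6))
        · exfalso
          have hlexusw : List.Lex (· < ·) u sw := by
            rcases hor with hc | hc
            · exact absurd hc hup
            · exact hc
          have hwu : List.Lex (· < ·) w u := by
            rcases lex_trichotomy u w with h | h | h
            · exact absurd h hnl
            · exact absurd (h ▸ List.prefix_refl u) hnp
            · exact h
          obtain ⟨w'', hw'', hw''p⟩ := hextS u hu hule
          have h6 : List.Lex (· < ·) w w'' := lex_ext_right w u w'' hwu hw''p
          have h7 : List.Lex (· < ·) w'' sw := lex_ext_left u sw w'' hlexusw hup hw''p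
          rcases hmin w'' hw'' h6 with rfl | h8
          · exact lex_irrefl h7
          · exact lex_asymm h7 h8
      · rintro ⟨m, ⟨hm1, hm2⟩, hmeq⟩
        dsimp only at hmeq
        subst hmeq
        have hswlen : sw.length = ℓ := hsw.2
        have htklen : (sw.take m).length = m := by rw [List.length_take]; omega
        have hmaster := lex_take_lcp w sw m hlexw hlen hm1
        refine ⟨⟨hP sw hsw.1 _ (List.take_prefix _ _), by rw [htklen]; omega,
          Or.inl (List.take_prefix _ _)⟩, ?_⟩
        rintro ⟨-, -, hc | hc⟩
        · exact hmaster.2 hc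
        · exact lex_asymm hmaster.1 hc
    -- counting
    have hinj : Set.InjOn (fun m => sw.take m) (Set.Ioc lcp ℓ) := by
      intro m hm m' hm' he
      simp only [Set.mem_Ioc] at hm hm'
      have h1 : (sw.take m).length = m := by
        rw [List.length_take]; have := hsw.2; omega
      have h2 : (sw.take m').length = m' := by
        rw [List.length_take]; have := hsw.2; omega
      rw [← h1, ← h2]
      exact congrArg List.length he
    have hcard : (B sw \ B w).ncard = ℓ - lcp := by
      rw [hdiffeq, Set.ncard_image_of_injOn hinj, ← Finset.coe_Ioc,
        Set.ncard_coe_finset, Nat.card_Ioc]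
    have hDelta : Delta w sw = ℓ - lcp := by
      rw [Delta, if_pos hlen, hw.2, hlcpdef]
    have := Set.ncard_diff_add_ncard_of_subset hsub (hBfin sw)
    omega
  -- the base lemma: the minimum of S
  have hbase : ∀ w, w ∈ S → (∀ v ∈ S, v = w ∨ List.Lex (· < ·) w v) →
      (B w).ncard = ℓ + 1 := by
    intro w hw hmin
    have heq : B w = (fun m => w.take m) '' Set.Iic ℓ := by
      ext u
      constructor
      · rintro ⟨hu, hule, hor⟩
        by_cases hup : u <+: w
        · exact ⟨u.length, hule, (List.prefix_iff_eq_take.mp hup).symm⟩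
        · exfalso
          have hlexuw : List.Lex (· < ·) u w := by
            rcases hor with hc | hc
            · exact absurd hc hup
            · exact hc
          obtain ⟨w'', hw'', hw''p⟩ := hextS u hu hule
          have h7 : List.Lex (· < ·) w'' w := lex_ext_left u w w'' hlexuw hup hw''p
          rcases hmin w'' hw'' with rfl | h8
          · exact lex_irrefl h7
          · exact lex_asymm h7 h8
      · rintro ⟨m, hm, rfl⟩
        refine ⟨hP w hw.1 _ (List.take_prefix _ _), ?_, Or.inl (List.take_prefix _ _)⟩
        rw [List.length_take]
        have := hw.2
        simp only [Set.mem_Iic] at hm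
        omega
    have hinj : Set.InjOn (fun m => w.take m) (Set.Iic ℓ) := by
      intro m hm m' hm' he
      simp only [Set.mem_Iic] at hm hm'
      have hwl := hw.2
      have h1 : (w.take m).length = m := by rw [List.length_take]; omega
      have h2 : (w.take m').length = m' := by rw [List.length_take]; omega
      rw [← h1, ← h2]
      exact congrArg List.length he
    rw [heq, Set.ncard_image_of_injOn hinj, ← Finset.coe_Iic, Set.ncard_coe_finset,
      Nat.card_Iic]
  -- the top lemma: the maximum of S
  have htop : ∀ w, w ∈ S → (∀ v ∈ S, v = w ∨ List.Lex (· < ·) v w) →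
      (B w).ncard = vCount L ℓ ∧ Delta w (succ w) = ℓ + 1 := by
    intro w hw hmax
    constructor
    · have heq : B w = {u ∈ L | u.length ≤ ℓ} := by
        ext u
        constructor
        · rintro ⟨hu, hule, -⟩; exact ⟨hu, hule⟩
        · rintro ⟨hu, hule⟩
          refine ⟨hu, hule, ?_⟩
          by_cases hup : u <+: w
          · exact Or.inl hup
          · rcases lex_trichotomy u w with h | h | h
            · exact Or.inr h
            · exact absurd (h ▸ List.prefix_refl u) hup
            · exfalso
              obtain ⟨w'', hw'', hw''p⟩ := hextS u hu hule
              have h6 : List.Lex (· < ·) w w'' := lex_ext_right w u w'' h hw''p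
              rcases hmax w'' hw'' with rfl | h8
              · exact lex_irrefl h6
              · exact lex_asymm h6 h8
      rw [heq, vCount]
    · obtain ⟨h1, h2, h3⟩ := hsucc w hw.1
      have hgt : ℓ < (succ w).length := by
        rcases h2 with h2 | ⟨h2a, h2b⟩
        · rw [← hw.2]; exact h2
        · exfalso
          have hswS : succ w ∈ S := ⟨h1, by rw [← h2a, hw.2]⟩
          rcases hmax _ hswS with heq | h4
          · exact lex_irrefl (heq ▸ h2b)
          · exact lex_asymm h2b h4
      obtain ⟨v, hv, hvlen⟩ := hlenex (ℓ + 1)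
      have hwl : w.length = ℓ := hw.2
      have hle : (succ w).length ≤ ℓ + 1 := by
        rcases h3 v hv (Or.inl (by omega)) with heq | h4
        · have := congrArg List.length heq; omega
        · rcases h4 with h4 | ⟨h4, _⟩ <;> omega
      have hlen' : (succ w).length = ℓ + 1 := by omega
      rw [Delta, if_neg (by rw [hw.2, hlen']; omega), hw.2, hlen']
      omega
  -- main induction
  have main : ∀ n : ℕ, ∀ w, w ∈ S → ({v ∈ S | v = w ∨ List.Lex (· < ·) w v}).ncard ≤ n →
      (∑ᶠ v ∈ {v ∈ S | v = w ∨ List.Lex (· < ·) w v}, Delta v (succ v)) + (B w).ncard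
        = vCount L ℓ + (ℓ + 1) := by
    intro n
    induction n with
    | zero =>
      intro w hw hcard
      exfalso
      have hTfin : ({v ∈ S | v = w ∨ List.Lex (· < ·) w v}).Finite :=
        hSfin.subset (fun v hv => hv.1)
      have : 0 < ({v ∈ S | v = w ∨ List.Lex (· < ·) w v}).ncard :=
        (Set.ncard_pos hTfin).mpr ⟨w, hw, Or.inl rfl⟩
      omega
    | succ n ih =>
      intro w hw hcard
      have hTfin : ∀ u, ({v ∈ S | v = u ∨ List.Lex (· < ·) u v}).Finite :=
        fun u => hSfin.subset (fun v hv => hv.1)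
      by_cases hex : ∃ v ∈ S, List.Lex (· < ·) w v
      · obtain ⟨hsw, hlexw, hmin⟩ := hstep w hw hex
        have hTeq : {v ∈ S | v = w ∨ List.Lex (· < ·) w v}
            = insert w {v ∈ S | v = succ w ∨ List.Lex (· < ·) (succ w) v} := by
          ext v
          constructor
          · rintro ⟨hv, rfl | hlex⟩
            · exact Set.mem_insert _ _
            · exact Set.mem_insert_of_mem _ ⟨hv, (hmin v hv hlex)⟩
          · rintro (rfl | ⟨hv, rfl | hlex⟩)
            · exact ⟨hw, Or.inl rfl⟩
            · exact ⟨hv, Or.inr hlexw⟩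
            · exact ⟨hv, Or.inr (lex_trans hlexw hlex)⟩
        have hwnot : w ∉ {v ∈ S | v = succ w ∨ List.Lex (· < ·) (succ w) v} := by
          rintro ⟨-, heqq | hlex⟩
          · rw [← heqq] at hlexw; exact lex_irrefl hlexw
          · exact lex_asymm hlexw hlex
        have hssub : {v ∈ S | v = succ w ∨ List.Lex (· < ·) (succ w) v}
            ⊂ {v ∈ S | v = w ∨ List.Lex (· < ·) w v} := by
          constructor
          · rintro v ⟨hv, rfl | hlex⟩
            · exact ⟨hv, Or.inr hlexw⟩
            · exact ⟨hv, Or.inr (lex_trans hlexw hlex)⟩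
          · intro hc
            exact hwnot (hc ⟨hw, Or.inl rfl⟩)
        have hcard2 : ({v ∈ S | v = succ w ∨ List.Lex (· < ·) (succ w) v}).ncard ≤ n := by
          have := Set.ncard_lt_ncard hssub (hTfin w)
          omega
        have hsum : (∑ᶠ v ∈ {v ∈ S | v = w ∨ List.Lex (· < ·) w v}, Delta v (succ v))
            = Delta w (succ w)
              + ∑ᶠ v ∈ {v ∈ S | v = succ w ∨ List.Lex (· < ·) (succ w) v}, Delta v (succ v) := by
          rw [hTeq]
          exact finsum_mem_insert _ hwnot (hTfin (succ w))
        have hB := hdiff w hw hex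
        have hih := ih (succ w) hsw hcard2
        omega
      · push_neg at hex
        have hmax : ∀ v ∈ S, v = w ∨ List.Lex (· < ·) v w := by
          intro v hv
          rcases lex_trichotomy v w with h | h | h
          · exact Or.inr h
          · exact Or.inl h
          · exact absurd h (hex v hv)
        have hTeq : {v ∈ S | v = w ∨ List.Lex (· < ·) w v} = {w} := by
          ext v
          constructor
          · rintro ⟨hv, rfl | hlex⟩
            · rfl
            · exact absurd hlex (hex v hv)
          · rintro rfl
            exact ⟨hw, Or.inl rfl⟩
        obtain ⟨hB, hD⟩ := htop w hw hmax
        rw [hTeq, finsum_mem_singleton, hB, hD]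
        omega
  -- conclusion
  obtain ⟨w₀, hw₀len⟩ := hlenex ℓ
  have hw₀S : w₀ ∈ S := ⟨hw₀len.1, hw₀len.2⟩
  obtain ⟨m, hm, hmmin⟩ := exists_lex_min S hSfin ⟨w₀, hw₀S⟩
  have hTeq : {v ∈ S | v = m ∨ List.Lex (· < ·) m v} = S := by
    ext v
    constructor
    · rintro ⟨hv, -⟩; exact hv
    · intro hv; exact ⟨hv, hmmin v hv⟩
  have := main (({v ∈ S | v = m ∨ List.Lex (· < ·) m v}).ncard) m hm le_rfl
  rw [hTeq, hbase m hm hmmin] at this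
  omega
end

section
/- Let L be a PCE language, u ∈ L of length ℓ with N = val_L(u) (i.e., u is the (N+1)-th word of L in radix order), and suppose u is not the maximal word of L of length ℓ. Then ∑_{i=v_L(ℓ−1)}^{N} cp_L(i) equals the cardinality of the left bank of Succ(u), i.e., the number of words w ∈ L with |w| ≤ ℓ, w lexicographically smaller than the prefix of Succ(u) of length |w|, and w not a prefix of Succ(u). -/
open Filter Topology

section MyAux
variable {A : Type*} [LinearOrder A]

lemma my_lex_of_prefix {w v : List A} (h : w <+: v) (hne : w ≠ v) :
    List.Lex (· < ·) w v := by
  induction w generalizing v with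
  | nil =>
    cases v with
    | nil => exact absurd rfl hne
    | cons b t => exact List.Lex.nil
  | cons a t ih =>
    cases v with
    | nil => simp at h
    | cons b s =>
      rw [List.cons_prefix_cons] at h
      obtain ⟨rfl, hts⟩ := h
      exact List.Lex.cons (ih hts (fun he => hne (by rw [he])))

lemma my_lex_extend_left {w v w' : List A} (h : List.Lex (· < ·) w v)
    (hnp : ¬ w <+: v) (hp : w <+: w') : List.Lex (· < ·) w' v := by
  induction h generalizing w' with
  | nil => exact absurd (List.nil_prefix) hnp
  | @rel a l1 b l2 hab =>
    cases w' with
    | nil => simp at hp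
    | cons c s =>
      rw [List.cons_prefix_cons] at hp
      obtain ⟨rfl, -⟩ := hp
      exact List.Lex.rel hab
  | @cons a l1 l2 hlex ih =>
    have hnp' : ¬ l1 <+: l2 := fun hh => hnp (by rw [List.cons_prefix_cons]; exact ⟨rfl, hh⟩)
    cases w' with
    | nil => simp at hp
    | cons c s =>
      rw [List.cons_prefix_cons] at hp
      obtain ⟨rfl, hs⟩ := hp
      exact List.Lex.cons (ih hnp' hs)

lemma my_lex_extend_right {w v v' : List A} (h : List.Lex (· < ·) w v)
    (hnp : ¬ w <+: v) (hp : v <+: v') : List.Lex (· < ·) w v' := by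
  induction h generalizing v' with
  | nil => exact absurd (List.nil_prefix) hnp
  | @rel a l1 b l2 hab =>
    cases v' with
    | nil => simp at hp
    | cons c s =>
      rw [List.cons_prefix_cons] at hp
      obtain ⟨rfl, -⟩ := hp
      exact List.Lex.rel hab
  | @cons a l1 l2 hlex ih =>
    have hnp' : ¬ l1 <+: l2 := fun hh => hnp (by rw [List.cons_prefix_cons]; exact ⟨rfl, hh⟩)
    cases v' with
    | nil => simp at hp
    | cons c s =>
      rw [List.cons_prefix_cons] at hp
      obtain ⟨rfl, hs⟩ := hp
      exact List.Lex.cons (ih hnp' hs)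

lemma my_lcpLen_le (u v : List A) : lcpLen u v ≤ u.length := by
  induction u generalizing v with
  | nil => cases v <;> simp [lcpLen]
  | cons a t ih =>
    cases v with
    | nil => simp [lcpLen]
    | cons b s =>
      by_cases hab : a = b
      · simp only [lcpLen, if_pos hab, List.length_cons]
        exact Nat.succ_le_succ (ih s)
      · simp [lcpLen, hab]

lemma my_take_lcpLen (u v : List A) :
    u.take (lcpLen u v) = v.take (lcpLen u v) := by
  induction u generalizing v with
  | nil => cases v <;> simp [lcpLen]
  | cons a t ih =>
    cases v with
    | nil => simp [lcpLen]
    | cons b s =>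
      by_cases hab : a = b
      · subst hab
        have hl : lcpLen (a :: t) (a :: s) = lcpLen t s + 1 := by simp [lcpLen]
        rw [hl, List.take_succ_cons, List.take_succ_cons, ih s]
      · simp [lcpLen, hab]

lemma my_le_lcpLen {u v : List A} {k : ℕ} (hk : k ≤ u.length)
    (h : u.take k = v.take k) : k ≤ lcpLen u v := by
  induction u generalizing v k with
  | nil =>
    have : k = 0 := by simpa using hk
    exact this ▸ Nat.zero_le _
  | cons a t ih =>
    cases k with
    | zero => exact Nat.zero_le _
    | succ k =>
      cases v with
      | nil => simp at h
      | cons b s =>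
        simp only [List.take_succ_cons, List.cons.injEq] at h
        obtain ⟨rfl, hts⟩ := h
        have hl : lcpLen (a :: t) (a :: s) = lcpLen t s + 1 := by simp [lcpLen]
        rw [hl]
        exact Nat.succ_le_succ (ih (by simpa using hk) hts)

lemma my_preDiff_ncard {u v : List A} (h : u.length = v.length) :
    ({w | w <+: u} \ {w | w <+: v} : Set (List A)).ncard = u.length - lcpLen u v := by
  have key : ({w | w <+: u} \ {w | w <+: v} : Set (List A))
      = (fun k => u.take k) '' (Set.Ioc (lcpLen u v) u.length) := by
    ext w
    constructor
    · rintro ⟨hwu, hwv⟩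
      simp only [Set.mem_setOf_eq] at hwu hwv
      refine ⟨w.length, ⟨?_, hwu.length_le⟩, (List.prefix_iff_eq_take.mp hwu).symm⟩
      by_contra hle
      push_neg at hle
      apply hwv
      have h2 : u.take w.length = v.take w.length :=
        calc u.take w.length = (u.take (lcpLen u v)).take w.length := by
              rw [List.take_take, min_eq_left hle]
          _ = (v.take (lcpLen u v)).take w.length := by rw [my_take_lcpLen]
          _ = v.take w.length := by rw [List.take_take, min_eq_left hle]
      have hw : w = v.take w.length := (List.prefix_iff_eq_take.mp hwu).trans h2
      rw [hw]
      exact List.take_prefix _ _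
    · rintro ⟨k, ⟨hpk, hkl⟩, rfl⟩
      refine ⟨List.take_prefix _ _, ?_⟩
      intro hv
      simp only [Set.mem_setOf_eq] at hv
      have hlenk : (u.take k).length = k := by rw [List.length_take]; omega
      have heq : u.take k = v.take k := by
        have := List.prefix_iff_eq_take.mp hv
        rwa [hlenk] at this
      exact absurd (my_le_lcpLen hkl heq) (Nat.not_le.mpr hpk)
  rw [key, Set.ncard_image_of_injOn, ← Finset.coe_Ioc, Set.ncard_coe_finset,
    Nat.card_Ioc]
  intro k1 hk1 k2 hk2 he
  have := congrArg List.length he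
  simp only [List.length_take] at this
  simp only [Set.mem_Ioc] at hk1 hk2
  omega

end MyAux

section MyEnum
variable {A : Type*} [Fintype A] [LinearOrder A]

lemma my_radix_asymm {w v : List A} (h1 : RadixLt w v) (h2 : RadixLt v w) : False := by
  rcases h1 with h1 | ⟨e1, h1⟩ <;> rcases h2 with h2 | ⟨e2, h2⟩
  · omega
  · omega
  · omega
  · exact asymm h1 h2

lemma my_radix_length_le {w v : List A} (h : RadixLt w v) : w.length ≤ v.length := by
  rcases h with h | ⟨e, -⟩ <;> omega

lemma my_index_lt {L : Set (List A)} {rep : ℕ → List A} (hrep : RadixEnum L rep)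
    {m n : ℕ} (h : RadixLt (rep m) (rep n)) : m < n := by
  by_contra hle
  push_neg at hle
  rcases Nat.lt_or_ge n m with hlt | hge
  · exact my_radix_asymm h (hrep.2 n m hlt)
  · have : n = m := le_antisymm hle hge
    subst this
    rcases h with h | ⟨-, h⟩
    · omega
    · exact asymm h h

lemma my_rep_mem {L : Set (List A)} {rep : ℕ → List A} (hrep : RadixEnum L rep)
    (n : ℕ) : rep n ∈ L := hrep.1.mapsTo (Set.mem_univ n)

lemma my_rep_surj {L : Set (List A)} {rep : ℕ → List A} (hrep : RadixEnum L rep)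
    {w : List A} (hw : w ∈ L) : ∃ n, rep n = w := by
  obtain ⟨n, -, hn⟩ := hrep.1.surjOn hw
  exact ⟨n, hn⟩

lemma my_ext_to {L : Set (List A)} (hL : PCE L) {w : List A} (hw : w ∈ L) {k : ℕ}
    (hk : w.length ≤ k) : ∃ w' ∈ L, w <+: w' ∧ w'.length = k := by
  have long : ∀ n : ℕ, ∃ w' ∈ L, w <+: w' ∧ n ≤ w'.length := by
    intro n
    induction n with
    | zero => exact ⟨w, hw, List.prefix_refl w, Nat.zero_le _⟩
    | succ n ih =>
      obtain ⟨w', hw', hpre, hlen⟩ := ih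
      obtain ⟨w'', hw'', hpre', hne⟩ := hL.2 w' hw'
      have hlt : w'.length < w''.length :=
        lt_of_le_of_ne hpre'.length_le (fun he => hne (hpre'.eq_of_length he))
      exact ⟨w'', hw'', hpre.trans hpre', by omega⟩
  obtain ⟨w', hw', hpre, hlen⟩ := long k
  refine ⟨w'.take k, hL.1 w' hw' _ (List.take_prefix _ _),
    List.prefix_take_iff.mpr ⟨hpre, hk⟩, by rw [List.length_take]; omega⟩

lemma my_seg {L : Set (List A)} {rep : ℕ → List A} (hrep : RadixEnum L rep)
    (ℓ : ℕ) (i : ℕ) :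
    (rep i).length < ℓ ↔ i < {w ∈ L | w.length < ℓ}.ncard := by
  set S := {w ∈ L | w.length < ℓ} with hS
  have hSfin : S.Finite := (List.finite_length_lt A ℓ).subset (fun w hw => hw.2)
  set I := {i : ℕ | (rep i).length < ℓ} with hI
  have hmemS : ∀ j ∈ I, rep j ∈ S := fun j hj => ⟨my_rep_mem hrep j, hj⟩
  have hinj : Set.InjOn rep I := hrep.1.injOn.mono (Set.subset_univ I)
  have hIfin : I.Finite := by
    have : (rep ⁻¹' S).Finite :=
      hSfin.preimage (hrep.1.injOn.mono (Set.subset_univ _))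
    exact this.subset (fun j hj => hmemS j hj)
  have hdc : ∀ {a b : ℕ}, a ∈ I → b ≤ a → b ∈ I := by
    intro a b ha hb
    rcases eq_or_lt_of_le hb with rfl | hb
    · exact ha
    · have hle : (rep b).length ≤ (rep a).length := my_radix_length_le (hrep.2 b a hb)
      exact lt_of_le_of_lt hle ha
  have himg : rep '' I = S := by
    ext w
    constructor
    · rintro ⟨j, hj, rfl⟩; exact hmemS j hj
    · rintro ⟨hwL, hwlen⟩
      obtain ⟨j, rfl⟩ := my_rep_surj hrep hwL
      exact ⟨j, hwlen, rfl⟩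
  have hcard : I.ncard = S.ncard := by
    rw [← himg, Set.ncard_image_of_injOn hinj]
  constructor
  · intro hi
    have hsub : Set.Iic i ⊆ I := fun j hj => hdc hi hj
    have h1 : (Set.Iic i).ncard ≤ I.ncard := Set.ncard_le_ncard hsub hIfin
    have h2 : (Set.Iic i).ncard = i + 1 := by
      rw [← Finset.coe_Iic, Set.ncard_coe_finset, Nat.card_Iic]
    omega
  · intro hi
    by_contra hni
    have hsub : I ⊆ Set.Iio i := by
      intro j hj
      simp only [Set.mem_Iio]
      by_contra hji
      push_neg at hji
      exact hni (hdc hj hji)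
    have h1 : I.ncard ≤ (Set.Iio i).ncard := Set.ncard_le_ncard hsub (Set.finite_Iio i)
    have h2 : (Set.Iio i).ncard = i := by
      rw [← Finset.coe_Iio, Set.ncard_coe_finset, Nat.card_Iio]
    omega

lemma my_leftBank_empty {L : Set (List A)} (hL : PCE L) {x : List A}
    (hx : ∀ w ∈ L, w.length = x.length → ¬ List.Lex (· < ·) w x) :
    leftBank L x = ∅ := by
  rw [Set.eq_empty_iff_forall_notMem]
  rintro w ⟨⟨hwL, hwlen, hwlex⟩, hwp⟩
  obtain ⟨w', hw', hpre, hlen⟩ := my_ext_to hL hwL hwlen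
  exact hx w' hw' hlen (my_lex_extend_left hwlex hwp hpre)

lemma my_step {L : Set (List A)} (hL : PCE L) {rep : ℕ → List A}
    (hrep : RadixEnum L rep) (i : ℕ)
    (hlen : (rep i).length = (rep (i + 1)).length) :
    (leftBank L (rep (i + 1))).ncard
      = (leftBank L (rep i)).ncard + Delta (rep i) (rep (i + 1)) := by
  have hxy0 := hrep.2 i (i + 1) (lt_add_one i)
  set x := rep i with hx
  set y := rep (i + 1) with hy
  have hxL : x ∈ L := my_rep_mem hrep i
  have hyL : y ∈ L := my_rep_mem hrep (i + 1)
  have hxy : List.Lex (· < ·) x y := by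
    rcases hxy0 with h | ⟨-, h⟩
    · omega
    · exact h
  have key : leftBank L y
      = leftBank L x ∪ (({w | w <+: x} ∩ L) \ {w | w <+: y}) := by
    ext w
    simp only [leftBank, Set.mem_union, Set.mem_diff, Set.mem_setOf_eq,
      Set.mem_sep_iff, Set.mem_inter_iff]
    constructor
    · rintro ⟨⟨hwL, hwlen, hwy⟩, hwny⟩
      by_cases hwx : w <+: x
      · exact Or.inr ⟨⟨hwx, hwL⟩, hwny⟩
      · left
        refine ⟨⟨hwL, by omega, ?_⟩, hwx⟩
        rcases trichotomous_of (List.Lex ((· < ·) : A → A → Prop)) w x with h | rfl | h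
        · exact h
        · exact absurd List.prefix_rfl hwx
        · exfalso
          have hwlx : w.length ≤ x.length := by omega
          obtain ⟨w', hw'L, hpre, hlen'⟩ := my_ext_to hL hwL hwlx
          have hnxw : ¬ x <+: w := by
            intro hp
            have : x = w := hp.eq_of_length (le_antisymm hp.length_le hwlx)
            subst this
            exact asymm h h
          have h1 : List.Lex (· < ·) x w' := my_lex_extend_right h hnxw hpre
          have h2 : List.Lex (· < ·) w' y := my_lex_extend_left hwy hwny hpre
          obtain ⟨m, hm⟩ := my_rep_surj hrep hw'L
          have hi1 : i < m := my_index_lt hrep (by rw [hm]; exact Or.inr ⟨hlen'.symm, h1⟩)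
          have hi2 : m < i + 1 := my_index_lt hrep
            (by rw [hm]; exact Or.inr ⟨hlen'.trans hlen, h2⟩)
          omega
    · rintro (⟨⟨hwL, hwlen, hwx⟩, hwnx⟩ | ⟨⟨hwx, hwL⟩, hwny⟩)
      · refine ⟨⟨hwL, by omega, List.lex_trans (fun h1 h2 => lt_trans h1 h2) hwx hxy⟩, ?_⟩
        intro hwy
        exact asymm hxy (my_lex_extend_left hwx hwnx hwy)
      · refine ⟨⟨hwL, le_trans hwx.length_le (le_of_eq hlen), ?_⟩, hwny⟩
        rcases eq_or_ne w x with rfl | hne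
        · exact hxy
        · exact List.lex_trans (fun h1 h2 => lt_trans h1 h2) (my_lex_of_prefix hwx hne) hxy
  have hsetx : ({w | w <+: x} ∩ L) \ {w | w <+: y} = {w | w <+: x} \ {w | w <+: y} := by
    ext w
    constructor
    · rintro ⟨⟨h1, -⟩, h2⟩; exact ⟨h1, h2⟩
    · rintro ⟨h1, h2⟩; exact ⟨⟨h1, hL.1 x hxL w h1⟩, h2⟩
  have hdisj : Disjoint (leftBank L x) (({w | w <+: x} ∩ L) \ {w | w <+: y}) := by
    rw [Set.disjoint_left]
    rintro w ⟨-, hwnp⟩ ⟨⟨hwp, -⟩, -⟩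
    exact hwnp hwp
  have hfin1 : (leftBank L x).Finite :=
    (List.finite_length_le A x.length).subset (fun w hw => hw.1.2.1)
  have hfin2 : (({w | w <+: x} ∩ L) \ {w | w <+: y}).Finite :=
    (List.finite_length_le A x.length).subset
      (fun w hw => hw.1.1.length_le)
  rw [key, Set.ncard_union_eq hdisj hfin1 hfin2, hsetx, my_preDiff_ncard hlen]
  have hD : Delta x y = x.length - lcpLen x y := by
    rw [Delta, if_pos hlen]
  rw [hD]

end MyEnum


/-- Theorem (lb-car-pro), non-maximal case: if `u ∈ L` is the `(N+1)`-th word of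
the PCE language `L` in radix order, `ℓ = |u|`, and `u` is not the maximal word
of `L` of length `ℓ`, then the sum of the carry propagations at the words of
ranks `v_L(ℓ-1), …, N` equals the cardinality of the left bank of `Succ u`. -/
theorem carry_stmt7 {A : Type*} [Fintype A] [LinearOrder A]
    (L : Set (List A)) (hL : PCE L)
    (rep : ℕ → List A) (hrep : RadixEnum L rep)
    (u : List A) (hu : u ∈ L) (N : ℕ) (hN : rep N = u)
    (hnotmax : ∃ w ∈ L, w.length = u.length ∧ List.Lex (· < ·) u w) :
    ∑ i ∈ Finset.Icc ({w ∈ L | w.length < u.length}.ncard) N,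
        Delta (rep i) (rep (i + 1)) =
      (leftBank L (rep (N + 1))).ncard := by
  subst hN
  set ℓ := (rep N).length with hℓ
  set M := {w ∈ L | w.length < ℓ}.ncard with hM
  have hseg : ∀ i, (rep i).length < ℓ ↔ i < M := fun i => my_seg hrep ℓ i
  -- length of rep (N+1) is ℓ
  have hlenN1 : (rep (N + 1)).length = ℓ := by
    obtain ⟨w, hwL, hwlen, hwlex⟩ := hnotmax
    obtain ⟨m, rfl⟩ := my_rep_surj hrep hwL
    have hNm : N < m := my_index_lt hrep (Or.inr ⟨hwlen.symm, hwlex⟩)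
    have hge : ℓ ≤ (rep (N + 1)).length :=
      my_radix_length_le (hrep.2 N (N + 1) (lt_add_one N))
    have hle : (rep (N + 1)).length ≤ ℓ := by
      rcases eq_or_lt_of_le (Nat.succ_le_of_lt hNm) with he | hlt
      · have h1 : (rep (N + 1)).length = ℓ := by
          rw [show N + 1 = m from he]; exact hwlen
        omega
      · have := my_radix_length_le (hrep.2 (N + 1) m hlt)
        omega
    omega
  have hMN : M ≤ N := by
    have : ¬ (rep N).length < ℓ := by omega
    rw [hseg N] at this
    omega
  have hlen_eq : ∀ i, M ≤ i → i ≤ N + 1 → (rep i).length = ℓ := by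
    intro i h1 h2
    have hge : ℓ ≤ (rep i).length := by
      have : ¬ (rep i).length < ℓ := by rw [hseg i]; omega
      omega
    have hle : (rep i).length ≤ ℓ := by
      rcases eq_or_lt_of_le h2 with rfl | hlt
      · omega
      · have := my_radix_length_le (hrep.2 i (N + 1) hlt)
        omega
    omega
  have main : ∀ j, M + j ≤ N + 1 →
      ∑ i ∈ Finset.Ico M (M + j), Delta (rep i) (rep (i + 1))
        = (leftBank L (rep (M + j))).ncard := by
    intro j
    induction j with
    | zero =>
      intro _
      simp only [Nat.add_zero, Finset.Ico_self, Finset.sum_empty]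
      rw [my_leftBank_empty hL, Set.ncard_empty]
      intro w hwL hwlen hwlex
      obtain ⟨m, rfl⟩ := my_rep_surj hrep hwL
      have hmM : m < M := my_index_lt hrep (Or.inr ⟨hwlen, hwlex⟩)
      have : (rep m).length < ℓ := (hseg m).mpr hmM
      have hMl : (rep M).length = ℓ := hlen_eq M le_rfl (by omega)
      omega
    | succ j ih =>
      intro hj
      have hstep := my_step hL hrep (M + j)
        (by rw [hlen_eq (M + j) (by omega) (by omega),
                hlen_eq (M + j + 1) (by omega) (by omega)])
      rw [show M + (j + 1) = M + j + 1 from rfl,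
        Finset.sum_Ico_succ_top (by omega : M ≤ M + j), ih (by omega), ← hstep]
  have hfin := main (N + 1 - M) (by omega)
  rw [show M + (N + 1 - M) = N + 1 by omega] at hfin
  rw [← Finset.Ico_add_one_right_eq_Icc]
  exact hfin
end

section
/- Let L be a PCE language with exponential growth. The length-filtered carry propagation FCP(L) = lim_{ℓ→∞} (1/v_L(ℓ)) ∑_{i=0}^{ℓ} v_L(i) exists if and only if the local growth rate γ_L = lim_{ℓ→∞} u_L(ℓ+1)/u_L(ℓ) exists, and in that case FCP(L) = γ_L/(γ_L − 1). -/
open Filter Topology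

section CarryAux

private lemma contract_lemma (e δ : ℕ → ℝ) (q : ℝ) (hq0 : 0 ≤ q) (hq1 : q < 1)
    (he : ∀ n, 0 ≤ e n) (hrec : ∀ᶠ n in atTop, e (n+1) ≤ q * e n + δ n)
    (hδ : Tendsto δ atTop (nhds 0)) : Tendsto e atTop (nhds 0) := by
  rw [Metric.tendsto_atTop]
  intro ε hε
  have hq1' : 0 < 1 - q := by linarith
  have h1 : (0:ℝ) < (1-q)*ε/2 := by positivity
  obtain ⟨N₁, hN₁⟩ := Metric.tendsto_atTop.1 hδ ((1-q)*ε/2) h1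
  obtain ⟨N₂, hN₂⟩ := eventually_atTop.1 hrec
  set N := max N₁ N₂ with hN
  have key : ∀ k, e (N + k) ≤ q^k * e N + ε/2 := by
    intro k
    induction k with
    | zero => simp; linarith
    | succ k ih =>
      have hδN : δ (N+k) ≤ (1-q)*ε/2 := by
        have := hN₁ (N+k) (le_trans (le_max_left _ _) (Nat.le_add_right _ _))
        rw [Real.dist_eq, sub_zero] at this
        exact (le_abs_self _).trans this.le
      have hr := hN₂ (N+k) (le_trans (le_max_right _ _) (Nat.le_add_right _ _))
      have h2 : q * e (N+k) ≤ q * (q^k * e N + ε/2) :=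
        mul_le_mul_of_nonneg_left ih hq0
      have : e (N + (k+1)) ≤ q * (q^k * e N + ε/2) + (1-q)*ε/2 := by
        have : N + (k+1) = (N+k) + 1 := by omega
        rw [this]; linarith
      calc e (N + (k+1)) ≤ q * (q^k * e N + ε/2) + (1-q)*ε/2 := this
        _ = q^(k+1) * e N + (q*ε/2 + (1-q)*ε/2) := by ring
        _ = q^(k+1) * e N + ε/2 := by ring
  have hpow : Tendsto (fun k => q^k * e N) atTop (nhds 0) := by
    simpa using (tendsto_pow_atTop_nhds_zero_of_lt_one hq0 hq1).mul_const (e N)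
  obtain ⟨K, hK⟩ := (Metric.tendsto_atTop.1 hpow) (ε/2) (by positivity)
  refine ⟨N + K, fun n hn => ?_⟩
  have hnN : N ≤ n := by omega
  have h3 : e n ≤ q^(n-N) * e N + ε/2 := by
    have := key (n - N)
    rwa [Nat.add_sub_cancel' hnN] at this
  have h4 : q^(n-N) * e N < ε/2 := by
    have := hK (n-N) (by omega)
    rw [Real.dist_eq, sub_zero] at this
    exact (le_abs_self _).trans_lt this
  rw [Real.dist_eq, sub_zero, abs_of_nonneg (he n)]
  linarith

private lemma sum_div_tendsto (u : ℕ → ℝ) (hu : ∀ n, 1 ≤ u n) (γ : ℝ) (hγ : 1 < γ)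
    (h : Tendsto (fun n => u (n+1) / u n) atTop (nhds γ)) :
    Tendsto (fun n => (∑ i ∈ Finset.range (n+1), u i) / u n) atTop (nhds (γ/(γ-1))) := by
  have hupos : ∀ n, 0 < u n := fun n => lt_of_lt_of_le one_pos (hu n)
  have hune : ∀ n, u n ≠ 0 := fun n => (hupos n).ne'
  set v : ℕ → ℝ := fun n => ∑ i ∈ Finset.range (n+1), u i with hv
  set w : ℕ → ℝ := fun n => v n / u n with hw
  set r : ℕ → ℝ := fun n => u (n+1) / u n with hr
  set c : ℝ := γ/(γ-1) with hc
  have hγ0 : (0:ℝ) < γ := by linarith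
  have hγ1 : γ - 1 ≠ 0 := sub_ne_zero.2 (by linarith)
  have hrpos : ∀ n, 0 < r n := fun n => div_pos (hupos _) (hupos _)
  have hkey : ∀ n, w (n+1) - c = (w n - c) / r n + c * ((r n)⁻¹ - γ⁻¹) := by
    intro n
    have h0 := hune n
    have h1 := hune (n+1)
    have hb : r n ≠ 0 := (hrpos n).ne'
    have hwrec : w (n+1) = 1 + w n / r n := by
      have hv' : v (n+1) = v n + u (n+1) := Finset.sum_range_succ u (n+1)
      show v (n+1) / u (n+1) = 1 + (v n / u n) / (u (n+1) / u n)
      rw [hv']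
      field_simp
      ring
    rw [hwrec, hc]
    rw [show r n = u (n+1) / u n from rfl] at hb ⊢
    generalize v n / u n = a
    generalize hg : u (n+1) / u n = b at hb ⊢
    field_simp
    ring
  set e : ℕ → ℝ := fun n => |w n - c| with he
  set δ : ℕ → ℝ := fun n => |c| * |(r n)⁻¹ - γ⁻¹| with hδ
  set q : ℝ := (γ⁻¹ + 1)/2 with hq
  have hγinv : γ⁻¹ < 1 := by
    rw [inv_lt_one_iff₀]; right; exact hγ
  have hq0 : 0 ≤ q := by
    have : 0 < γ⁻¹ := inv_pos.2 hγ0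
    rw [hq]; linarith
  have hq1 : q < 1 := by rw [hq]; linarith
  have hrinv : Tendsto (fun n => (r n)⁻¹) atTop (nhds γ⁻¹) := h.inv₀ (ne_of_gt hγ0)
  have hδ0 : Tendsto δ atTop (nhds 0) := by
    have : Tendsto (fun n => (r n)⁻¹ - γ⁻¹) atTop (nhds 0) := by
      simpa using hrinv.sub (tendsto_const_nhds (x := γ⁻¹))
    have habs : Tendsto (fun n => |(r n)⁻¹ - γ⁻¹|) atTop (nhds 0) := by
      simpa using this.abs
    simpa using habs.const_mul |c|
  have hrec : ∀ᶠ n in atTop, e (n+1) ≤ q * e n + δ n := by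
    have hev : ∀ᶠ n in atTop, (r n)⁻¹ < q := by
      apply hrinv.eventually_lt_const
      rw [hq]; linarith
    filter_upwards [hev] with n hn
    have h1 : e (n+1) ≤ e n * (r n)⁻¹ + δ n := by
      rw [he]; simp only
      rw [hkey n]
      calc |(w n - c) / r n + c * ((r n)⁻¹ - γ⁻¹)|
          ≤ |(w n - c) / r n| + |c * ((r n)⁻¹ - γ⁻¹)| := abs_add_le _ _
        _ = |w n - c| * (r n)⁻¹ + |c| * |(r n)⁻¹ - γ⁻¹| := by
            rw [abs_mul, div_eq_mul_inv, abs_mul, abs_of_nonneg (inv_nonneg.2 (hrpos n).le)]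
    have h2 : e n * (r n)⁻¹ ≤ e n * q := by
      apply mul_le_mul_of_nonneg_left hn.le (abs_nonneg _)
    calc e (n+1) ≤ e n * (r n)⁻¹ + δ n := h1
      _ ≤ e n * q + δ n := by linarith
      _ = q * e n + δ n := by ring
  have he0 : Tendsto e atTop (nhds 0) :=
    contract_lemma e δ q hq0 hq1 (fun n => abs_nonneg _) hrec hδ0
  have : Tendsto w atTop (nhds c) := by
    rw [tendsto_iff_dist_tendsto_zero]
    simpa [Real.dist_eq] using he0
  exact this

private lemma one_lt_gamma (u : ℕ → ℝ) (hu : ∀ n, 1 ≤ u n) (γ : ℝ)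
    (h : Tendsto (fun n => u (n+1)/u n) atTop (nhds γ))
    (hexp : 1 < limsup (fun n : ℕ => (u n) ^ ((n:ℝ)⁻¹)) atTop) : 1 < γ := by
  by_contra hcon
  push_neg at hcon
  set s := limsup (fun n : ℕ => (u n) ^ ((n:ℝ)⁻¹)) atTop with hs
  set r : ℝ := (1 + s)/2 with hrdef
  have hr1 : 1 < r := by rw [hrdef]; linarith
  have hrs : r < s := by rw [hrdef]; linarith
  have hγr : γ < r := lt_of_le_of_lt hcon hr1
  have hr0 : (0:ℝ) < r := by linarith
  -- eventually ratio < r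
  obtain ⟨N, hN⟩ := eventually_atTop.1 (h.eventually_lt_const hγr)
  have hupos : ∀ n, 0 < u n := fun n => lt_of_lt_of_le one_pos (hu n)
  have hstep : ∀ n ≥ N, u (n+1) ≤ r * u n := by
    intro n hn
    have := (hN n hn).le
    rw [div_le_iff₀ (hupos n)] at this
    linarith [this]
  set C : ℝ := u N / r^N with hC
  have hC0 : 0 < C := div_pos (hupos N) (pow_pos hr0 N)
  have hgeom : ∀ n ≥ N, u n ≤ C * r^n := by
    intro n hn
    induction n with
    | zero =>
      have : N = 0 := Nat.le_zero.1 hn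
      subst this
      rw [hC]
      field_simp
      exact le_rfl
    | succ k ih =>
      rcases Nat.lt_or_ge k N with hk | hk
      · have : N = k + 1 := by omega
        subst this
        rw [hC]
        field_simp
        exact le_rfl
      · have h1 := hstep k hk
        have h2 := ih hk
        calc u (k+1) ≤ r * u k := h1
          _ ≤ r * (C * r^k) := mul_le_mul_of_nonneg_left h2 hr0.le
          _ = C * r^(k+1) := by ring
  -- bound the roots
  set g : ℕ → ℝ := fun n => C ^ ((n:ℝ)⁻¹) * r with hg
  have hfg : ∀ᶠ n in atTop, (u n) ^ ((n:ℝ)⁻¹) ≤ g n := by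
    filter_upwards [eventually_ge_atTop (max N 1)] with n hn
    have hn1 : 1 ≤ n := le_trans (le_max_right _ _) hn
    have hnN : N ≤ n := le_trans (le_max_left _ _) hn
    have hinv : (0:ℝ) ≤ (n:ℝ)⁻¹ := by positivity
    have h1 : (u n) ^ ((n:ℝ)⁻¹) ≤ (C * r^n) ^ ((n:ℝ)⁻¹) :=
      Real.rpow_le_rpow (hupos n).le (hgeom n hnN) hinv
    have h2 : (C * r^n) ^ ((n:ℝ)⁻¹) = C ^ ((n:ℝ)⁻¹) * (r^n) ^ ((n:ℝ)⁻¹) :=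
      Real.mul_rpow hC0.le (pow_pos hr0 n).le
    have h3 : ((r^n : ℝ)) ^ ((n:ℝ)⁻¹) = r := by
      rw [← Real.rpow_natCast r n, ← Real.rpow_mul hr0.le]
      rw [mul_inv_cancel₀ (by exact_mod_cast Nat.pos_of_ne_zero (by omega) |>.ne')]
      exact Real.rpow_one r
    rw [h2, h3] at h1
    exact h1
  have hgtend : Tendsto g atTop (nhds r) := by
    have h1 : Tendsto (fun n : ℕ => C ^ ((n:ℝ)⁻¹)) atTop (nhds 1) := by
      have h2 : Tendsto (fun n : ℕ => Real.log C * (n:ℝ)⁻¹) atTop (nhds 0) := by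
        simpa using (tendsto_inv_atTop_nhds_zero_nat : Tendsto (fun n : ℕ => (n:ℝ)⁻¹) atTop (nhds 0)).const_mul (Real.log C)
      have h3 : Tendsto (fun n : ℕ => Real.exp (Real.log C * (n:ℝ)⁻¹)) atTop (nhds 1) := by
        have := (Real.continuous_exp.tendsto 0).comp h2; rw [Real.exp_zero] at this; exact this
      convert h3 using 2 with n
      rw [Real.rpow_def_of_pos hC0]
    simpa using h1.mul_const r
  have hbound : limsup (fun n : ℕ => (u n) ^ ((n:ℝ)⁻¹)) atTop ≤ limsup g atTop := by
    refine limsup_le_limsup hfg ?_ ?_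
    · apply Filter.IsCoboundedUnder.of_frequently_ge (a := 1)
      apply Filter.Frequently.of_forall
      intro n
      calc (1:ℝ) = (u n) ^ (0:ℝ) := (Real.rpow_zero _).symm
        _ ≤ (u n) ^ ((n:ℝ)⁻¹) := Real.rpow_le_rpow_of_exponent_le (hu n) (by positivity)
    · exact hgtend.isBoundedUnder_le
  rw [hgtend.limsup_eq] at hbound
  have : s ≤ r := hbound
  linarith

variable {A : Type*} [Fintype A] [LinearOrder A] {L : Set (List A)}

private lemma finS (L : Set (List A)) (ℓ : ℕ) : {w ∈ L | w.length = ℓ}.Finite :=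
  (List.finite_length_eq A ℓ).subset (fun w hw => hw.2)

private lemma finV (L : Set (List A)) (ℓ : ℕ) : {w ∈ L | w.length ≤ ℓ}.Finite :=
  (List.finite_length_le A ℓ).subset (fun w hw => hw.2)

private lemma vCount_succ (L : Set (List A)) (n : ℕ) :
    vCount L (n+1) = vCount L n + uCount L (n+1) := by
  have hdisj : Disjoint {w ∈ L | w.length ≤ n} {w ∈ L | w.length = n+1} := by
    rw [Set.disjoint_left]; rintro w ⟨-, h1⟩ ⟨-, h2⟩; omega
  have hunion : {w ∈ L | w.length ≤ n+1}
      = {w ∈ L | w.length ≤ n} ∪ {w ∈ L | w.length = n+1} := by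
    ext w
    constructor
    · rintro ⟨hw, hlen⟩
      rcases Nat.lt_or_ge w.length (n+1) with h | h
      · exact Or.inl ⟨hw, by omega⟩
      · exact Or.inr ⟨hw, by omega⟩
    · rintro (⟨hw, h⟩ | ⟨hw, h⟩) <;> exact ⟨hw, by omega⟩
  rw [vCount, hunion, Set.ncard_union_eq hdisj (finV L n) (finS L (n+1))]
  rfl

private lemma vCount_eq_sum (L : Set (List A)) (n : ℕ) :
    vCount L n = ∑ i ∈ Finset.range (n+1), uCount L i := by
  induction n with
  | zero =>
    have h : {w ∈ L | w.length ≤ 0} = {w ∈ L | w.length = 0} := by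
      ext w; simp [Nat.le_zero]
    simp [vCount, uCount, h]
  | succ k ih =>
    rw [vCount_succ, ih]
    exact (Finset.sum_range_succ (fun i => uCount L i) (k+1)).symm

private lemma exists_len (hL : PCE L) (hne : L.Nonempty) : ∀ ℓ, ∃ w ∈ L, w.length = ℓ := by
  intro ℓ
  induction ℓ with
  | zero =>
    obtain ⟨w, hw⟩ := hne
    exact ⟨[], hL.1 w hw [] List.nil_prefix, rfl⟩
  | succ k ih =>
    obtain ⟨w, hwL, hwlen⟩ := ih
    obtain ⟨x, hxL, hpre, hnev⟩ := hL.2 w hwL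
    have hlt : w.length < x.length := by
      rcases lt_or_eq_of_le hpre.length_le with h | h
      · exact h
      · exact absurd (hpre.eq_of_length h) hnev
    refine ⟨x.take (k+1), hL.1 x hxL _ (List.take_prefix _ _), ?_⟩
    rw [List.length_take]
    omega

private lemma one_le_uCount (hL : PCE L) (hne : L.Nonempty) (ℓ : ℕ) : 1 ≤ uCount L ℓ := by
  obtain ⟨w, hw, hlen⟩ := exists_len hL hne ℓ
  have h1 : ({w ∈ L | w.length = ℓ}).Nonempty := ⟨w, hw, hlen⟩
  exact (Set.ncard_pos (finS L ℓ)).2 h1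

private lemma uCount_le_vCount (L : Set (List A)) (ℓ : ℕ) : uCount L ℓ ≤ vCount L ℓ :=
  Set.ncard_le_ncard (fun w hw => ⟨hw.1, le_of_eq hw.2⟩) (finV L ℓ)

private lemma uCount_succ_le (hL : PCE L) (ℓ : ℕ) :
    uCount L (ℓ+1) ≤ Fintype.card A * uCount L ℓ := by
  classical
  set F : List A × A → List A := fun p => p.1 ++ [p.2] with hF
  set s : Set (List A) := {w ∈ L | w.length = ℓ} with hsdef
  have hsfin : (s ×ˢ (Set.univ : Set A)).Finite := (finS L ℓ).prod Set.finite_univ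
  have hsub : {w ∈ L | w.length = ℓ+1} ⊆ F '' (s ×ˢ Set.univ) := by
    rintro w ⟨hwL, hwlen⟩
    have hdrop : (w.drop ℓ).length = 1 := by rw [List.length_drop]; omega
    obtain ⟨a, ha⟩ := List.length_eq_one_iff.1 hdrop
    refine ⟨(w.take ℓ, a),
      ⟨⟨hL.1 w hwL _ (List.take_prefix _ _), by rw [List.length_take]; omega⟩, trivial⟩, ?_⟩
    show w.take ℓ ++ [a] = w
    rw [← ha, List.take_append_drop]
  have h1 : uCount L (ℓ+1) ≤ (s ×ˢ (Set.univ : Set A)).ncard := by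
    calc uCount L (ℓ+1) ≤ (F '' (s ×ˢ Set.univ)).ncard :=
          Set.ncard_le_ncard hsub (hsfin.image F)
      _ ≤ (s ×ˢ (Set.univ : Set A)).ncard := Set.ncard_image_le hsfin
  have h2 : (s ×ˢ (Set.univ : Set A)).ncard = uCount L ℓ * Fintype.card A := by
    have e1 : Nat.card ↥(s ×ˢ (Set.univ : Set A)) = Nat.card ↥s * Nat.card ↥(Set.univ : Set A) := by
      rw [Nat.card_congr (Equiv.Set.prod s (Set.univ : Set A)), Nat.card_prod]
    have e2 : Nat.card ↥(Set.univ : Set A) = Fintype.card A := by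
      rw [Nat.card_congr (Equiv.Set.univ A), Nat.card_eq_fintype_card]
    show Nat.card ↥(s ×ˢ (Set.univ : Set A)) = uCount L ℓ * Fintype.card A
    rw [e1, e2]
    rfl
  rw [h2] at h1
  exact h1.trans_eq (Nat.mul_comm _ _)

end CarryAux

/-- For a PCE language `L` with exponential growth, the length-filtered carry
propagation `FCP(L) = lim (1/v_L(ℓ)) ∑_{i=0}^ℓ v_L(i)` exists if and only if
the local growth rate `γ_L = lim u_L(ℓ+1)/u_L(ℓ)` exists, and in that case
`FCP(L) = γ_L / (γ_L - 1)`. -/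
theorem carry_stmt9 {A : Type*} [Fintype A] [LinearOrder A]
    (L : Set (List A)) (hL : PCE L)
    (hexp : 1 < Filter.limsup (fun ℓ : ℕ => (uCount L ℓ : ℝ) ^ ((ℓ : ℝ)⁻¹)) atTop) :
    ((∃ F : ℝ, Tendsto
        (fun ℓ : ℕ => (∑ i ∈ Finset.range (ℓ + 1), (vCount L i : ℝ)) / (vCount L ℓ : ℝ))
        atTop (nhds F)) ↔
      (∃ γ : ℝ, Tendsto (fun ℓ : ℕ => (uCount L (ℓ + 1) : ℝ) / (uCount L ℓ : ℝ))
        atTop (nhds γ))) ∧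
    ∀ γ : ℝ, Tendsto (fun ℓ : ℕ => (uCount L (ℓ + 1) : ℝ) / (uCount L ℓ : ℝ))
        atTop (nhds γ) →
      Tendsto
        (fun ℓ : ℕ => (∑ i ∈ Finset.range (ℓ + 1), (vCount L i : ℝ)) / (vCount L ℓ : ℝ))
        atTop (nhds (γ / (γ - 1))) := by
  classical
  -- L is nonempty
  have hne : L.Nonempty := by
    by_contra hemp
    rw [Set.not_nonempty_iff_eq_empty] at hemp
    have hz : ∀ ℓ : ℕ, 1 ≤ ℓ → ((uCount L ℓ : ℝ)) ^ ((ℓ:ℝ)⁻¹) = 0 := by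
      intro ℓ hℓ
      have h0 : uCount L ℓ = 0 := by
        rw [uCount, hemp]
        simp
      rw [h0]
      push_cast
      exact Real.zero_rpow (by positivity)
    have hev : (fun ℓ : ℕ => ((uCount L ℓ : ℝ)) ^ ((ℓ:ℝ)⁻¹)) =ᶠ[atTop] (fun _ => (0:ℝ)) := by
      filter_upwards [eventually_ge_atTop 1] with ℓ hℓ
      exact hz ℓ hℓ
    rw [limsup_congr hev, limsup_const] at hexp
    linarith
  set u : ℕ → ℝ := fun ℓ => (uCount L ℓ : ℝ) with hudef
  set v : ℕ → ℝ := fun ℓ => (vCount L ℓ : ℝ) with hvdef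
  have hu1 : ∀ ℓ, 1 ≤ u ℓ := by
    intro ℓ
    rw [hudef]
    simp only
    exact_mod_cast one_le_uCount hL hne ℓ
  have hupos : ∀ ℓ, 0 < u ℓ := fun ℓ => lt_of_lt_of_le one_pos (hu1 ℓ)
  have hune : ∀ ℓ, u ℓ ≠ 0 := fun ℓ => (hupos ℓ).ne'
  have hv_sum : ∀ n, v n = ∑ i ∈ Finset.range (n+1), u i := by
    intro n
    rw [hvdef]
    simp only
    rw [vCount_eq_sum]
    push_cast
    rfl
  have hv1 : ∀ n, 1 ≤ v n := by
    intro n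
    rw [hv_sum]
    calc (1:ℝ) ≤ u 0 := hu1 0
      _ ≤ ∑ i ∈ Finset.range (n+1), u i :=
        Finset.single_le_sum (fun i _ => by linarith [hu1 i])
          (Finset.mem_range.2 (by omega))
  have hvpos : ∀ n, 0 < v n := fun n => lt_of_lt_of_le one_pos (hv1 n)
  have hvne : ∀ n, v n ≠ 0 := fun n => (hvpos n).ne'
  have hvsucc : ∀ n, v (n+1) = v n + u (n+1) := by
    intro n
    rw [hudef, hvdef]
    simp only
    exact_mod_cast congrArg (Nat.cast (R := ℝ)) (vCount_succ L n)
  -- forward direction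
  have forward : ∀ γ : ℝ, Tendsto (fun ℓ => u (ℓ+1)/u ℓ) atTop (nhds γ) →
      Tendsto (fun ℓ => (∑ i ∈ Finset.range (ℓ+1), v i) / v ℓ) atTop
        (nhds (γ/(γ-1))) := by
    intro γ hγt
    have hγ1 : 1 < γ := one_lt_gamma u hu1 γ hγt hexp
    have hγ0 : (0:ℝ) < γ := by linarith
    have hγs : γ - 1 ≠ 0 := sub_ne_zero.2 (by linarith)
    have hw := sum_div_tendsto u hu1 γ hγ1 hγt
    have hwv : Tendsto (fun n => v n / u n) atTop (nhds (γ/(γ-1))) := by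
      apply hw.congr
      intro n
      rw [hv_sum]
    have hcne : γ/(γ-1) ≠ 0 := div_ne_zero (by linarith) hγs
    have hvr : Tendsto (fun n => v (n+1) / v n) atTop (nhds γ) := by
      have h1 : Tendsto (fun n => v (n+1) / u (n+1)) atTop (nhds (γ/(γ-1))) :=
        (tendsto_add_atTop_iff_nat 1).2 hwv
      have h2 : Tendsto (fun n => (v (n+1)/u (n+1)) * (u (n+1)/u n) / (v n / u n))
          atTop (nhds (γ/(γ-1) * γ / (γ/(γ-1)))) := (h1.mul hγt).div hwv hcne
      have h3 : γ/(γ-1) * γ / (γ/(γ-1)) = γ := by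
        field_simp
      rw [h3] at h2
      have hgen2 : ∀ a b c d : ℝ, b ≠ 0 → c ≠ 0 → d ≠ 0 →
          a/b * (b/c) / (d/c) = a/d := by
        intro a b c d hb hc hd
        field_simp
      apply h2.congr
      intro n
      exact hgen2 (v (n+1)) (u (n+1)) (u n) (v n) (hune (n+1)) (hune n) (hvne n)
    exact sum_div_tendsto v hv1 γ hγ1 hvr
  -- backward direction
  have backward : ∀ F : ℝ,
      Tendsto (fun ℓ => (∑ i ∈ Finset.range (ℓ+1), v i)/v ℓ) atTop (nhds F) →
      Tendsto (fun ℓ => u (ℓ+1)/u ℓ) atTop (nhds (F/(F-1))) := by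
    intro F hF
    set S : ℕ → ℝ := fun n => ∑ i ∈ Finset.range (n+1), v i with hSdef
    set t : ℕ → ℝ := fun n => S n / v n with htdef
    have ht1 : ∀ n, 1 ≤ t n := by
      intro n
      have hSv : v n ≤ S n :=
        Finset.single_le_sum (f := v) (fun i _ => by linarith [hv1 i])
          (Finset.self_mem_range_succ n)
      rw [htdef]
      simp only
      rw [le_div_iff₀ (hvpos n)]
      linarith
    set K : ℝ := (Fintype.card A : ℝ) with hKdef
    have hK0 : 0 ≤ K := by positivity
    have hKu : ∀ n, u (n+1) ≤ K * u n := by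
      intro n
      rw [hudef, hKdef]
      simp only
      exact_mod_cast uCount_succ_le hL n
    have huv : ∀ n, u n ≤ v n := by
      intro n
      rw [hudef, hvdef]
      simp only
      exact_mod_cast uCount_le_vCount L n
    have hvv : ∀ n, v (n+1) ≤ (1 + K) * v n := by
      intro n
      have h1 := hKu n
      have h2 := huv n
      have h3 := hvpos n
      rw [hvsucc]
      nlinarith
    have htid : ∀ n, t (n+1) = 1 + t n * (v n / v (n+1)) := by
      intro n
      have hS1 : S (n+1) = S n + v (n+1) := Finset.sum_range_succ v (n+1)
      rw [htdef]
      simp only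
      rw [hS1]
      have h0 := hvne n
      have h1 := hvne (n+1)
      field_simp
      ring
    have htlow : ∀ n, 1 + 1/(1+K) ≤ t (n+1) := by
      intro n
      have h1 : 1/(1+K) ≤ v n / v (n+1) := by
        rw [div_le_div_iff₀ (by linarith) (hvpos (n+1))]
        have := hvv n
        linarith
      have h2 : (1:ℝ) * (1/(1+K)) ≤ t n * (v n / v (n+1)) := by
        apply mul_le_mul (ht1 n) h1 (by positivity)
        linarith [ht1 n]
      rw [htid n]
      linarith
    have hF1 : 1 + 1/(1+K) ≤ F :=
      ge_of_tendsto ((tendsto_add_atTop_iff_nat 1).2 hF)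
        (Eventually.of_forall htlow)
    have hFgt : 1 < F := by
      have : (0:ℝ) < 1/(1+K) := by positivity
      linarith
    have hFne : F ≠ 0 := by linarith
    have hFs : F - 1 ≠ 0 := sub_ne_zero.2 (by linarith)
    have htne : ∀ n, t n ≠ 0 := fun n => by linarith [ht1 n]
    have hratio : Tendsto (fun n => v n / v (n+1)) atTop (nhds ((F-1)/F)) := by
      have h1 : Tendsto (fun n => (t (n+1) - 1)/ t n) atTop (nhds ((F-1)/F)) := by
        exact (((tendsto_add_atTop_iff_nat 1).2 hF).sub tendsto_const_nhds).div hF hFne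
      apply h1.congr
      intro n
      rw [htid n, add_sub_cancel_left, mul_div_cancel_left₀ _ (htne n)]
    set β : ℝ := F/(F-1) with hβdef
    have hβ1 : 1 < β := by
      rw [hβdef, lt_div_iff₀ (by linarith)]
      linarith
    have hdne : 1 - (F-1)/F ≠ 0 := by
      have : 1 - (F-1)/F = 1/F := by field_simp; ring
      rw [this]
      positivity
    have hβ : Tendsto (fun n => v (n+1)/v n) atTop (nhds β) := by
      have h2 : Tendsto (fun n => (v n / v (n+1))⁻¹) atTop (nhds (((F-1)/F)⁻¹)) :=
        hratio.inv₀ (div_ne_zero hFs hFne)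
      have h3 : ((F-1)/F)⁻¹ = β := by rw [inv_div]
      rw [h3] at h2
      exact h2.congr (fun n => by rw [inv_div])
    have hβshift : Tendsto (fun n => v (n+1+1)/v (n+1)) atTop (nhds β) :=
      (tendsto_add_atTop_iff_nat 1).2 hβ
    have hg : Tendsto (fun n => (v (n+1+1)/v (n+1) - 1)/(1 - v n / v (n+1)))
        atTop (nhds ((β-1)/(1-(F-1)/F))) :=
      (hβshift.sub tendsto_const_nhds).div (tendsto_const_nhds.sub hratio) hdne
    have hval : (β-1)/(1-(F-1)/F) = β := by
      rw [hβdef]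
      field_simp
    rw [hval] at hg
    have hgen : ∀ x y z : ℝ, y ≠ 0 → x + y ≠ 0 →
        z/y = ((x+y+z)/(x+y) - 1)/(1 - x/(x+y)) := by
      intro x y z hy hxy
      field_simp
      rw [show x + y + z - (x + y) = z by ring, show x + y - x = y by ring]
      exact (mul_div_cancel_left₀ z hy).symm
    have hpt : ∀ n, u (n+1+1)/u (n+1)
        = (v (n+1+1)/v (n+1) - 1)/(1 - v n / v (n+1)) := by
      intro n
      have e1 : v (n+1) = v n + u (n+1) := hvsucc n
      have e2 : v (n+1+1) = v n + u (n+1) + u (n+1+1) := by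
        rw [hvsucc (n+1), e1]
      rw [e1, e2]
      exact hgen (v n) (u (n+1)) (u (n+1+1)) (hune (n+1)) (by rw [← e1]; exact hvne (n+1))
    have hg2 : Tendsto (fun n => u (n+1+1)/u (n+1)) atTop (nhds β) :=
      hg.congr (fun n => (hpt n).symm)
    exact (tendsto_add_atTop_iff_nat 1).1 hg2
  refine ⟨⟨?_, ?_⟩, ?_⟩
  · rintro ⟨F, hF⟩
    exact ⟨F/(F-1), backward F hF⟩
  · rintro ⟨γ, hγt⟩
    exact ⟨γ/(γ-1), forward γ hγt⟩
  · intro γ hγt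
    exact forward γ hγt
end

section
/- There exists a PCE language H over a 3-letter alphabet with u_H(ℓ) = 2^ℓ for all ℓ (hence local growth rate 2 and length-filtered carry propagation 2) such that the carry propagation CP(H) = lim_{N→∞}(1/N)∑_{i<N} cp_H(i) does not exist. Specifically, along the subsequence N(ℓ) = 3·2^ℓ − 1, the averages (1/N(ℓ)) ∑_{i<N(ℓ)} cp_H(i) are eventually bounded above by 11/6 < 2. -/
open Filter Topology

namespace Carry11

/-- word of rank `r` (in lex order) among length-`ℓ` words of `H`. -/
def f : ℕ → ℕ → List (Fin 3)
  | 0, _ => []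
  | 1, r => if r = 0 then [0] else [2]
  | (ℓ+2), r =>
      if r < 3 * 2 ^ ℓ then f (ℓ+1) (r / 3) ++ [⟨r % 3, Nat.mod_lt _ (by norm_num)⟩]
      else f (ℓ+1) (r - 2 ^ (ℓ+1)) ++ [1]

lemma f_length : ∀ ℓ r, (f ℓ r).length = ℓ := by
  intro ℓ
  induction ℓ using Nat.strong_induction_on with
  | _ ℓ ih =>
    match ℓ with
    | 0 => intro r; rfl
    | 1 => intro r; by_cases h : r = 0 <;> simp [f, h]
    | (ℓ+2) =>
      intro r
      by_cases h : r < 3 * 2 ^ ℓ <;>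
        simp [f, h, ih (ℓ+1) (by omega)]

-- Lex append lemmas
lemma lex_append_right {u v : List (Fin 3)} (x y : Fin 3)
    (h : List.Lex (· < ·) u v) (hl : u.length = v.length) :
    List.Lex (· < ·) (u ++ [x]) (v ++ [y]) := by
  induction h with
  | nil => simp at hl
  | rel h => exact List.Lex.rel h
  | cons h ih => exact List.Lex.cons (ih (by simpa using hl))

lemma lex_append_last (u : List (Fin 3)) {x y : Fin 3} (h : x < y) :
    List.Lex (· < ·) (u ++ [x]) (u ++ [y]) := by
  induction u with
  | nil => exact List.Lex.rel h
  | cons a u ih => exact List.Lex.cons ih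

lemma lex_irrefl : ∀ (u : List (Fin 3)), ¬ List.Lex (· < ·) u u := by
  intro u h
  induction u with
  | nil => cases h
  | cons a u ih => cases h with
    | rel h => exact lt_irrefl _ h
    | cons h => exact ih h

lemma lex_asymm : ∀ (u v : List (Fin 3)),
    List.Lex (· < ·) u v → List.Lex (· < ·) v u → False := by
  intro u v h
  induction h with
  | nil => intro h2; cases h2
  | rel h => intro h2; cases h2 with
    | rel h' => exact absurd h (asymm h')
    | cons _ => exact absurd h (lt_irrefl _)
  | cons h ih => intro h2; cases h2 with
    | rel h' => exact absurd h' (lt_irrefl _)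
    | cons h' => exact ih h'

lemma f_mono : ∀ ℓ r s, r < s → s < 2 ^ ℓ → List.Lex (· < ·) (f ℓ r) (f ℓ s) := by
  intro ℓ
  induction ℓ using Nat.strong_induction_on with
  | _ ℓ ih =>
    match ℓ with
    | 0 => intro r s h hs; omega
    | 1 =>
      intro r s h hs
      interval_cases s
      · omega
      · have : r = 0 := by omega
        subst this
        simp only [f, if_pos rfl, if_neg (by omega : (1:ℕ) ≠ 0)]
        exact List.Lex.rel (by decide)
    | (ℓ+2) =>
      intro r s h hs
      have hpow : (0:ℕ) < 2 ^ ℓ := Nat.pow_pos (by norm_num)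
      have e1 : 2 ^ (ℓ+1) = 2 * 2 ^ ℓ := by ring
      have e2 : 2 ^ (ℓ+2) = 4 * 2 ^ ℓ := by ring
      by_cases hr : r < 3 * 2 ^ ℓ
      · by_cases hs' : s < 3 * 2 ^ ℓ
        · -- both in first region
          simp only [f, if_pos hr, if_pos hs']
          rcases Nat.lt_or_ge (r / 3) (s / 3) with hq | hq
          · exact lex_append_right _ _
              (ih (ℓ+1) (by omega) _ _ hq (by omega))
              (by rw [f_length, f_length])
          · have hq' : r / 3 = s / 3 := by omega
            rw [hq']
            exact lex_append_last _ (by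
              show (r % 3 : ℕ) < s % 3
              omega)
        · -- r first region, s second
          simp only [f, if_pos hr, if_neg hs']
          exact lex_append_right _ _
            (ih (ℓ+1) (by omega) _ _ (by omega) (by omega))
            (by rw [f_length, f_length])
      · -- both second region
        have hs' : ¬ s < 3 * 2 ^ ℓ := by omega
        simp only [f, if_neg hr, if_neg hs']
        exact lex_append_right _ _
          (ih (ℓ+1) (by omega) _ _ (by omega) (by omega))
          (by rw [f_length, f_length])

lemma f_ne {ℓ r s : ℕ} (h : r < s) (hs : s < 2 ^ ℓ) : f ℓ r ≠ f ℓ s := by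
  intro he
  have := f_mono ℓ r s h hs
  rw [he] at this
  exact lex_irrefl _ this

def H : Set (List (Fin 3)) := {w | ∃ ℓ r, r < 2 ^ ℓ ∧ w = f ℓ r}

lemma f_mem_H {ℓ r : ℕ} (h : r < 2 ^ ℓ) : f ℓ r ∈ H := ⟨ℓ, r, h, rfl⟩

lemma f_take : ∀ ℓ r k, r < 2 ^ ℓ → k ≤ ℓ → ∃ r', r' < 2 ^ k ∧ (f ℓ r).take k = f k r' := by
  intro ℓ
  induction ℓ using Nat.strong_induction_on with
  | _ ℓ ih =>
    match ℓ with
    | 0 =>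
      intro r k hr hk
      have : k = 0 := by omega
      subst this
      exact ⟨0, by norm_num, by simp [f]⟩
    | 1 =>
      intro r k hr hk
      match k with
      | 0 => exact ⟨0, by norm_num, by simp [f]⟩
      | 1 => exact ⟨r, hr, by rw [List.take_of_length_le (by rw [f_length])]⟩
    | (ℓ+2) =>
      intro r k hr hk
      have e1 : 2 ^ (ℓ+1) = 2 * 2 ^ ℓ := by ring
      have e2 : 2 ^ (ℓ+2) = 4 * 2 ^ ℓ := by ring
      rcases Nat.lt_or_ge k (ℓ+2) with hk' | hk'
      · -- k ≤ ℓ+1 : take k of parent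
        have hk2 : k ≤ ℓ + 1 := by omega
        by_cases h : r < 3 * 2 ^ ℓ
        · have hp : r / 3 < 2 ^ (ℓ+1) := by omega
          obtain ⟨r', h1, h2⟩ := ih (ℓ+1) (by omega) (r/3) k hp hk2
          refine ⟨r', h1, ?_⟩
          simp only [f, if_pos h]
          rw [List.take_append_of_le_length (by rw [f_length]; exact hk2), h2]
        · have hp : r - 2 ^ (ℓ+1) < 2 ^ (ℓ+1) := by omega
          obtain ⟨r', h1, h2⟩ := ih (ℓ+1) (by omega) _ k hp hk2
          refine ⟨r', h1, ?_⟩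
          simp only [f, if_neg h]
          rw [List.take_append_of_le_length (by rw [f_length]; exact hk2), h2]
      · have : k = ℓ + 2 := by omega
        subst this
        exact ⟨r, hr, by rw [List.take_of_length_le (by rw [f_length])]⟩

lemma f_child : ∀ ℓ r, r < 2 ^ ℓ → ∃ c, c < 2 ^ (ℓ+1) ∧ f ℓ r <+: f (ℓ+1) c := by
  intro ℓ r hr
  match ℓ with
  | 0 =>
    refine ⟨0, by norm_num, ?_⟩
    simp [f]
  | 1 =>
    interval_cases r
    · exact ⟨0, by norm_num, by decide⟩
    · exact ⟨3, by norm_num, by decide⟩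
  | (ℓ+1) =>
    have e1 : 2 ^ (ℓ+1) = 2 * 2 ^ ℓ := by ring
    by_cases h : r < 2 ^ ℓ
    · refine ⟨3 * r, by omega, ?_⟩
      have h3 : 3 * r < 3 * 2 ^ ℓ := by omega
      simp only [f, if_pos h3]
      rw [Nat.mul_div_cancel_left r (by norm_num : 0 < 3)]
      exact ⟨_, rfl⟩
    · refine ⟨r + 2 ^ (ℓ+1), by omega, ?_⟩
      have h3 : ¬ (r + 2 ^ (ℓ+1) < 3 * 2 ^ ℓ) := by omega
      simp only [f, if_neg h3]
      rw [Nat.add_sub_cancel]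
      exact ⟨_, rfl⟩

lemma H_pce : PCE H := by
  constructor
  · rintro w ⟨ℓ, r, hr, rfl⟩ u hu
    have hl : u.length ≤ ℓ := by
      have := hu.length_le; rwa [f_length] at this
    rw [List.prefix_iff_eq_take] at hu
    obtain ⟨r', h1, h2⟩ := f_take ℓ r u.length hr hl
    exact hu ▸ h2 ▸ f_mem_H h1
  · rintro w ⟨ℓ, r, hr, rfl⟩
    obtain ⟨c, hc, hpre⟩ := f_child ℓ r hr
    refine ⟨f (ℓ+1) c, f_mem_H hc, hpre, ?_⟩
    intro he
    have := f_length ℓ r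
    rw [he, f_length] at this
    omega

lemma H_uCount (ℓ : ℕ) : uCount H ℓ = 2 ^ ℓ := by
  have hset : {w ∈ H | w.length = ℓ} = ↑((Finset.range (2^ℓ)).image (f ℓ)) := by
    ext w
    simp only [Set.mem_setOf_eq, Finset.coe_image, Finset.coe_range, Set.mem_image,
      Set.mem_Iio]
    constructor
    · rintro ⟨⟨ℓ', r, hr, rfl⟩, hlen⟩
      rw [f_length] at hlen
      subst hlen
      exact ⟨r, hr, rfl⟩
    · rintro ⟨r, hr, rfl⟩
      exact ⟨f_mem_H hr, f_length _ _⟩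
  rw [uCount, hset, Set.ncard_coe_finset, Finset.card_image_of_injOn, Finset.card_range]
  intro r hr s hs hrs
  simp only [Finset.coe_range, Set.mem_Iio] at hr hs
  by_contra hne
  rcases Nat.lt_or_ge r s with h | h
  · exact f_ne h hs hrs
  · exact f_ne (by omega) hr hrs.symm

/-- level of index n -/
def lev (n : ℕ) : ℕ := Nat.log 2 (n+1)

def rk (n : ℕ) : ℕ := n + 1 - 2 ^ lev n

noncomputable def myrep (n : ℕ) : List (Fin 3) := f (lev n) (rk n)

lemma lev_spec (n : ℕ) : 2 ^ lev n ≤ n + 1 ∧ n + 1 < 2 ^ (lev n + 1) :=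
  ⟨Nat.pow_log_le_self 2 (by omega), Nat.lt_pow_succ_log_self (by norm_num) _⟩

lemma rk_lt (n : ℕ) : rk n < 2 ^ lev n := by
  have h := lev_spec n
  have : 2 ^ (lev n + 1) = 2 * 2 ^ lev n := by ring
  unfold rk; omega

lemma lev_eq {ℓ r : ℕ} (hr : r < 2 ^ ℓ) : lev (2 ^ ℓ - 1 + r) = ℓ := by
  have h1 : (0:ℕ) < 2 ^ ℓ := Nat.pow_pos (by norm_num)
  have h2 : 2 ^ (ℓ + 1) = 2 * 2 ^ ℓ := by ring
  exact Nat.log_eq_of_pow_le_of_lt_pow (by omega) (by omega)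

lemma rk_eq {ℓ r : ℕ} (hr : r < 2 ^ ℓ) : rk (2 ^ ℓ - 1 + r) = r := by
  have h1 : (0:ℕ) < 2 ^ ℓ := Nat.pow_pos (by norm_num)
  unfold rk
  rw [lev_eq hr]
  omega

lemma myrep_eval {ℓ r : ℕ} (hr : r < 2 ^ ℓ) : myrep (2 ^ ℓ - 1 + r) = f ℓ r := by
  unfold myrep
  rw [lev_eq hr, rk_eq hr]

lemma lev_mono {m n : ℕ} (h : m ≤ n) : lev m ≤ lev n := Nat.log_mono_right (by omega)

lemma myrep_radixLt {m n : ℕ} (h : m < n) : RadixLt (myrep m) (myrep n) := by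
  have hle : lev m ≤ lev n := lev_mono (le_of_lt h)
  rcases Nat.lt_or_ge (lev m) (lev n) with hl | hl
  · left
    rw [myrep, myrep, f_length, f_length]
    exact hl
  · have heq : lev m = lev n := by omega
    right
    constructor
    · rw [myrep, myrep, f_length, f_length, heq]
    · have h1 := lev_spec m
      have h2 := lev_spec n
      have hrk : rk m < rk n := by unfold rk; rw [heq]; rw [heq] at h1; omega
      rw [myrep, myrep, heq]
      exact f_mono _ _ _ hrk (rk_lt n)

lemma myrep_inj : Function.Injective myrep := by
  intro m n h
  by_contra hne
  rcases Nat.lt_or_ge m n with hl | hl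
  · rcases myrep_radixLt hl with h1 | ⟨_, h1⟩
    · rw [h] at h1; omega
    · rw [h] at h1; exact lex_irrefl _ h1
  · rcases myrep_radixLt (show n < m by omega) with h1 | ⟨_, h1⟩
    · rw [h] at h1; omega
    · rw [h] at h1; exact lex_irrefl _ h1

lemma myrep_radixEnum : RadixEnum H myrep := by
  refine ⟨⟨fun n _ => ?_, fun m _ n _ h => myrep_inj h, fun w hw => ?_⟩,
    fun m n h => myrep_radixLt h⟩
  · exact f_mem_H (rk_lt n)
  · obtain ⟨ℓ, r, hr, rfl⟩ := hw
    exact ⟨2 ^ ℓ - 1 + r, Set.mem_univ _, myrep_eval hr⟩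

lemma radixLt_asymm {u v : List (Fin 3)} (h1 : RadixLt u v) (h2 : RadixLt v u) : False := by
  rcases h1 with h1 | ⟨e1, h1⟩ <;> rcases h2 with h2 | ⟨e2, h2⟩
  · omega
  · omega
  · omega
  · exact lex_asymm _ _ h1 h2

lemma rep_unique {rep : ℕ → List (Fin 3)} (hrep : RadixEnum H rep) : rep = myrep := by
  funext n
  induction n using Nat.strong_induction_on with
  | _ n ih =>
    obtain ⟨⟨hmaps, hinj, hsurj⟩, hmono⟩ := hrep
    -- rep n ∈ H so rep n = myrep k for some k
    obtain ⟨k, _, hk⟩ := myrep_radixEnum.1.2.2 (hmaps (Set.mem_univ n))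
    rcases Nat.lt_trichotomy k n with hkn | hkn | hkn
    · exfalso
      have : rep k = myrep k := ih k hkn
      have : rep k = rep n := by rw [this]; exact hk
      have := hinj (Set.mem_univ k) (Set.mem_univ n) this
      omega
    · rw [hkn] at hk; exact hk.symm
    · -- k > n : then myrep n = rep j for some j, derive contradiction
      obtain ⟨j, _, hj⟩ := hsurj (myrep_radixEnum.1.1 (Set.mem_univ n))
      rcases Nat.lt_trichotomy j n with hjn | hjn | hjn
      · exfalso
        have : rep j = myrep j := ih j hjn
        have h2 : myrep j = myrep n := by rw [← this, hj]
        have := myrep_inj h2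
        omega
      · exact hjn ▸ hj
      · exfalso
        have h1 : RadixLt (rep n) (rep j) := hmono n j hjn
        rw [← hk, hj] at h1
        have h2 : RadixLt (myrep n) (myrep k) := myrep_radixLt hkn
        exact radixLt_asymm h1 h2

-- lcp lemmas
lemma lcp_le : ∀ (u v : List (Fin 3)), lcpLen u v ≤ u.length := by
  intro u
  induction u with
  | nil => intro v; cases v <;> simp [lcpLen]
  | cons a u ih =>
    intro v
    cases v with
    | nil => simp [lcpLen]
    | cons b v =>
      by_cases h : a = b <;> simp [lcpLen, h]
      exact ih v

lemma lcp_append_eq : ∀ (u : List (Fin 3)) (a b : List (Fin 3)),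
    lcpLen (u ++ a) (u ++ b) = u.length + lcpLen a b := by
  intro u
  induction u with
  | nil => intro a b; simp
  | cons x u ih => intro a b; simp [lcpLen, ih]; omega

lemma lcp_append_ne : ∀ (u v : List (Fin 3)), u.length = v.length → u ≠ v →
    ∀ (a b : List (Fin 3)), lcpLen (u ++ a) (v ++ b) = lcpLen u v := by
  intro u
  induction u with
  | nil =>
    intro v hl hne
    cases v
    · exact absurd rfl hne
    · simp at hl
  | cons x u ih =>
    intro v hl hne a b
    cases v with
    | nil => simp at hl
    | cons y v =>
      by_cases h : x = y
      · subst h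
        have h2 : u ≠ v := fun he => hne (by rw [he])
        have h3 := ih v (by simpa using hl) h2 a b
        simp only [List.cons_append, lcpLen, if_true, List.append_eq] at h3 ⊢
        simp [h3]
      · simp [lcpLen, h]

lemma delta_append_ne {u v : List (Fin 3)} (hl : u.length = v.length) (hne : u ≠ v)
    (x y : Fin 3) : Delta (u ++ [x]) (v ++ [y]) = Delta u v + 1 := by
  have h1 : lcpLen u v ≤ u.length := lcp_le u v
  simp only [Delta, List.length_append, List.length_singleton, hl, if_true,
    lcp_append_ne u v hl hne [x] [y]]
  omega

lemma delta_append_eq (u : List (Fin 3)) {x y : Fin 3} (hne : x ≠ y) :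
    Delta (u ++ [x]) (u ++ [y]) = 1 := by
  have : lcpLen [x] [y] = 0 := by simp [lcpLen, hne]
  simp only [Delta, List.length_append, List.length_singleton,
    lcp_append_eq u [x] [y], this, if_true]
  omega

/-- numeric Delta between consecutive ranks at a level -/
def D : ℕ → ℕ → ℕ
  | 0, _ => 0
  | 1, _ => 1
  | (ℓ+2), r =>
      if r < 3 * 2 ^ ℓ then (if r % 3 = 2 then D (ℓ+1) (r / 3) + 1 else 1)
      else D (ℓ+1) (r - 2 ^ (ℓ+1)) + 1

lemma delta_eq_D : ∀ ℓ r, r + 1 < 2 ^ ℓ → Delta (f ℓ r) (f ℓ (r+1)) = D ℓ r := by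
  intro ℓ
  induction ℓ using Nat.strong_induction_on with
  | _ ℓ ih =>
    match ℓ with
    | 0 => intro r hr; omega
    | 1 =>
      intro r hr
      have : r = 0 := by omega
      subst this
      decide
    | (ℓ+2) =>
      intro r hr
      have hpow : (0:ℕ) < 2 ^ ℓ := Nat.pow_pos (by norm_num)
      have e1 : 2 ^ (ℓ+1) = 2 * 2 ^ ℓ := by ring
      have e2 : 2 ^ (ℓ+2) = 4 * 2 ^ ℓ := by ring
      by_cases h : r < 3 * 2 ^ ℓ
      · by_cases hm : r % 3 = 2
        · -- parent changes: parents are r/3 and r/3 + 1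
          have hq : (r+1) / 3 = r / 3 + 1 := by omega
          have hp1 : r / 3 + 1 < 2 ^ (ℓ+1) := by omega
          have hparent_ne : f (ℓ+1) (r/3) ≠ f (ℓ+1) (r/3 + 1) :=
            f_ne (by omega) hp1
          by_cases h1 : r + 1 < 3 * 2 ^ ℓ
          · simp only [f, if_pos h, if_pos h1, hq]
            rw [delta_append_ne (by rw [f_length, f_length]) hparent_ne,
              ih (ℓ+1) (by omega) (r/3) hp1, D, if_pos h, if_pos hm]
          · -- r + 1 = 3 * 2^ℓ, next word is in second region
            have hr1 : r + 1 = 3 * 2 ^ ℓ := by omega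
            have hq2 : r + 1 - 2 ^ (ℓ+1) = r / 3 + 1 := by omega
            simp only [f, if_pos h, if_neg h1, hq2]
            rw [delta_append_ne (by rw [f_length, f_length]) hparent_ne,
              ih (ℓ+1) (by omega) (r/3) hp1, D, if_pos h, if_pos hm]
        · -- same parent, consecutive letters
          have hq : (r+1) / 3 = r / 3 := by omega
          have h1 : r + 1 < 3 * 2 ^ ℓ := by omega
          simp only [f, if_pos h, if_pos h1, hq]
          rw [delta_append_eq _ (by
            intro he
            rw [Fin.mk.injEq] at he
            omega), D, if_pos h, if_neg hm]
      · -- second region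
        have h1 : ¬ (r + 1 < 3 * 2 ^ ℓ) := by omega
        have hq : r + 1 - 2 ^ (ℓ+1) = (r - 2 ^ (ℓ+1)) + 1 := by omega
        have hp1 : (r - 2 ^ (ℓ+1)) + 1 < 2 ^ (ℓ+1) := by omega
        have hparent_ne : f (ℓ+1) (r - 2^(ℓ+1)) ≠ f (ℓ+1) (r - 2^(ℓ+1) + 1) :=
          f_ne (by omega) hp1
        simp only [f, if_neg h, if_neg h1, hq]
        rw [delta_append_ne (by rw [f_length, f_length]) hparent_ne,
          ih (ℓ+1) (by omega) _ hp1, D, if_neg h]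

def Pq (ℓ q : ℕ) : ℕ := ∑ r ∈ Finset.range q, D ℓ r

lemma pq_one (q : ℕ) : Pq 1 q = q := by
  simp [Pq, D]

lemma pq_rec1 (ℓ : ℕ) : ∀ q, q ≤ 3 * 2 ^ ℓ → Pq (ℓ+2) q = q + Pq (ℓ+1) (q / 3) := by
  intro q
  induction q with
  | zero => intro _; simp [Pq]
  | succ q ihq =>
    intro hq
    have hq' : q < 3 * 2 ^ ℓ := by omega
    have hsum : Pq (ℓ+2) (q+1) = Pq (ℓ+2) q + D (ℓ+2) q := by
      rw [Pq, Pq, Finset.sum_range_succ]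
    rw [hsum, ihq (by omega)]
    by_cases hm : q % 3 = 2
    · have h3 : (q+1)/3 = q/3 + 1 := by omega
      have hstep : Pq (ℓ+1) (q/3 + 1) = Pq (ℓ+1) (q/3) + D (ℓ+1) (q/3) := by
        rw [Pq, Pq, Finset.sum_range_succ]
      rw [h3, hstep, D, if_pos hq', if_pos hm]
      omega
    · have h3 : (q+1)/3 = q/3 := by omega
      rw [h3, D, if_pos hq', if_neg hm]
      omega

lemma pq_rec2 (ℓ : ℕ) : ∀ q, 3 * 2 ^ ℓ ≤ q → Pq (ℓ+2) q = q + Pq (ℓ+1) (q - 2 ^ (ℓ+1)) := by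
  intro q hq
  induction q, hq using Nat.le_induction with
  | base =>
    have e1 : 2 ^ (ℓ+1) = 2 * 2 ^ ℓ := by ring
    rw [pq_rec1 ℓ _ le_rfl]
    congr 2
    omega
  | succ q hq ihq =>
    have e1 : 2 ^ (ℓ+1) = 2 * 2 ^ ℓ := by ring
    have h2 : q + 1 - 2 ^ (ℓ+1) = (q - 2 ^ (ℓ+1)) + 1 := by omega
    have hsum : Pq (ℓ+2) (q+1) = Pq (ℓ+2) q + D (ℓ+2) q := by
      rw [Pq, Pq, Finset.sum_range_succ]
    have hstep : Pq (ℓ+1) (q - 2^(ℓ+1) + 1) = Pq (ℓ+1) (q - 2^(ℓ+1)) + D (ℓ+1) (q - 2^(ℓ+1)) := by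
      rw [Pq, Pq, Finset.sum_range_succ]
    rw [hsum, ihq, h2, hstep, D, if_neg (by omega)]
    omega

lemma pq_full : ∀ ℓ, Pq (ℓ+1) (2 ^ (ℓ+1) - 1) = 2 ^ (ℓ+2) - (ℓ+1) - 2 := by
  intro ℓ
  induction ℓ with
  | zero => decide
  | succ ℓ ih =>
    have hpow : (0:ℕ) < 2 ^ ℓ := Nat.pow_pos (by norm_num)
    have e1 : 2 ^ (ℓ+1) = 2 * 2 ^ ℓ := by ring
    have e2 : 2 ^ (ℓ+2) = 4 * 2 ^ ℓ := by ring
    have e3 : 2 ^ (ℓ+3) = 8 * 2 ^ ℓ := by ring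
    have e4 : 2 ^ (ℓ+1+1) = 4 * 2 ^ ℓ := by ring
    have e5 : 2 ^ (ℓ+1+2) = 8 * 2 ^ ℓ := by ring
    have hb : 3 * 2 ^ ℓ ≤ 2 ^ (ℓ+2) - 1 := by omega
    rw [pq_rec2 ℓ _ hb]
    have h4 : 2 ^ (ℓ+2) - 1 - 2 ^ (ℓ+1) = 2 ^ (ℓ+1) - 1 := by omega
    rw [h4, ih]
    have : ℓ + 1 + 2 ≤ 2 ^ (ℓ + 2) := by
      calc ℓ + 3 ≤ 2 ^ ℓ + 2 ^ ℓ + 2 ^ ℓ + 1 := by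
            have := Nat.lt_two_pow_self (n := ℓ); omega
        _ ≤ 4 * 2 ^ ℓ := by omega
        _ = 2 ^ (ℓ+2) := by omega
    omega

lemma pq_bound : ∀ n q, q ≤ 3 * 2 ^ n → 2 * Pq (n+2) q ≤ 3 * q + 2 := by
  intro n
  induction n with
  | zero =>
    intro q hq
    rw [pq_rec1 0 q (by omega), pq_one]
    omega
  | succ n ihn =>
    intro q hq
    rw [pq_rec1 (n+1) q hq]
    have h1 : q / 3 ≤ 3 * 2 ^ n := by
      have e1 : 2 ^ (n+1) = 2 * 2 ^ n := by ring
      omega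
    have h2 := ihn (q/3) h1
    have h3 : Pq (n+1+1) (q/3) = Pq (n+2) (q/3) := rfl
    rw [h3]
    omega

noncomputable def d (i : ℕ) : ℕ := Delta (myrep i) (myrep (i+1))

noncomputable def SA (N : ℕ) : ℕ := ∑ i ∈ Finset.range N, d i

lemma d_eq_D {ℓ r : ℕ} (hr : r + 1 < 2 ^ ℓ) : d (2 ^ ℓ - 1 + r) = D ℓ r := by
  have h1 : (0:ℕ) < 2 ^ ℓ := Nat.pow_pos (by norm_num)
  have h2 : 2 ^ ℓ - 1 + r + 1 = 2 ^ ℓ - 1 + (r + 1) := by omega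
  rw [d, h2, myrep_eval (by omega), myrep_eval hr]
  exact delta_eq_D ℓ r hr

lemma d_cross (ℓ : ℕ) : d (2 ^ (ℓ+1) - 2) = ℓ + 1 := by
  have h1 : (0:ℕ) < 2 ^ ℓ := Nat.pow_pos (by norm_num)
  have e1 : 2 ^ (ℓ+1) = 2 * 2 ^ ℓ := by ring
  have h2 : 2 ^ (ℓ+1) - 2 = 2 ^ ℓ - 1 + (2 ^ ℓ - 1) := by omega
  have h3 : 2 ^ (ℓ+1) - 2 + 1 = 2 ^ (ℓ+1) - 1 + 0 := by omega
  have h4 : myrep (2 ^ (ℓ+1) - 2) = f ℓ (2 ^ ℓ - 1) := by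
    rw [h2, myrep_eval (by omega)]
  have h5 : myrep (2 ^ (ℓ+1) - 2 + 1) = f (ℓ+1) 0 := by
    rw [h3, myrep_eval (Nat.pow_pos (by norm_num))]
  rw [d, h4, h5, Delta, if_neg (by rw [f_length, f_length]; omega), f_length, f_length]
  omega

lemma sum_range_split (g : ℕ → ℕ) {M N : ℕ} (h : M ≤ N) :
    ∑ i ∈ Finset.range N, g i
      = ∑ i ∈ Finset.range M, g i + ∑ i ∈ Finset.range (N - M), g (M + i) := by
  rw [Finset.range_eq_Ico, ← Finset.sum_Ico_consecutive g (Nat.zero_le M) h,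
    ← Finset.range_eq_Ico, Finset.sum_Ico_eq_sum_range]

lemma SA_full : ∀ ℓ, SA (2 ^ (ℓ+1) - 2) = 2 ^ (ℓ+2) - 2 * ℓ - 4 := by
  intro ℓ
  induction ℓ with
  | zero => simp [SA]
  | succ ℓ ih =>
    have hpow : (0:ℕ) < 2 ^ ℓ := Nat.pow_pos (by norm_num)
    have e1 : 2 ^ (ℓ+1) = 2 * 2 ^ ℓ := by ring
    have e2 : 2 ^ (ℓ+2) = 4 * 2 ^ ℓ := by ring
    have e3 : 2 ^ (ℓ+3) = 8 * 2 ^ ℓ := by ring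
    have e4 : 2 ^ (ℓ+1+1) = 4 * 2 ^ ℓ := by ring
    have e5 : 2 ^ (ℓ+1+2) = 8 * 2 ^ ℓ := by ring
    have hM : 2 ^ (ℓ+1) - 1 ≤ 2 ^ (ℓ+2) - 2 := by omega
    rw [SA, sum_range_split d hM]
    have hfirst : ∑ i ∈ Finset.range (2 ^ (ℓ+1) - 1), d i
        = SA (2 ^ (ℓ+1) - 2) + (ℓ + 1) := by
      have : 2 ^ (ℓ+1) - 1 = (2 ^ (ℓ+1) - 2) + 1 := by omega
      rw [this, Finset.sum_range_succ, ← SA, d_cross ℓ]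
    have hsecond : ∑ i ∈ Finset.range (2 ^ (ℓ+2) - 2 - (2 ^ (ℓ+1) - 1)), d (2 ^ (ℓ+1) - 1 + i)
        = Pq (ℓ+1) (2 ^ (ℓ+1) - 1) := by
      have hc : 2 ^ (ℓ+2) - 2 - (2 ^ (ℓ+1) - 1) = 2 ^ (ℓ+1) - 1 := by omega
      rw [hc, Pq]
      apply Finset.sum_congr rfl
      intro i hi
      rw [Finset.mem_range] at hi
      exact d_eq_D (by omega)
    rw [hfirst, hsecond, ih, pq_full ℓ]
    have hmain : ℓ + 1 + 2 ≤ 2 ^ (ℓ+2) := by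
      have := Nat.lt_two_pow_self (n := ℓ); omega
    have hl2 : 2 * ℓ + 4 ≤ 2 ^ (ℓ+2) := by
      have := Nat.lt_two_pow_self (n := ℓ); omega
    omega

lemma SA_B_bound : ∀ ℓ, 1 ≤ ℓ → 6 * SA (3 * 2 ^ ℓ - 1) ≤ 33 * 2 ^ ℓ - 11 := by
  intro ℓ hℓ
  have hpow : (2:ℕ) ≤ 2 ^ ℓ := by
    calc (2:ℕ) = 2 ^ 1 := rfl
      _ ≤ 2 ^ ℓ := Nat.pow_le_pow_right (by norm_num) hℓ
  have e1 : 2 ^ (ℓ+1) = 2 * 2 ^ ℓ := by ring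
  have e2 : 2 ^ (ℓ+2) = 4 * 2 ^ ℓ := by ring
  have hM : 2 ^ (ℓ+1) - 1 ≤ 3 * 2 ^ ℓ - 1 := by omega
  rw [SA, sum_range_split d hM]
  have hfirst : ∑ i ∈ Finset.range (2 ^ (ℓ+1) - 1), d i
      = SA (2 ^ (ℓ+1) - 2) + (ℓ + 1) := by
    have : 2 ^ (ℓ+1) - 1 = (2 ^ (ℓ+1) - 2) + 1 := by omega
    rw [this, Finset.sum_range_succ, ← SA, d_cross ℓ]
  have hsecond : ∑ i ∈ Finset.range (3 * 2 ^ ℓ - 1 - (2 ^ (ℓ+1) - 1)), d (2 ^ (ℓ+1) - 1 + i)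
      = Pq (ℓ+1) (2 ^ ℓ) := by
    have hc : 3 * 2 ^ ℓ - 1 - (2 ^ (ℓ+1) - 1) = 2 ^ ℓ := by omega
    rw [hc, Pq]
    apply Finset.sum_congr rfl
    intro i hi
    rw [Finset.mem_range] at hi
    exact d_eq_D (by omega)
  rw [hfirst, hsecond, SA_full ℓ]
  -- bound on Pq (ℓ+1) (2^ℓ)
  obtain ⟨m, rfl⟩ : ∃ m, ℓ = m + 1 := ⟨ℓ - 1, by omega⟩
  have hb : 2 * Pq (m+2) (2 ^ (m+1)) ≤ 3 * 2 ^ (m+1) + 2 := by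
    apply pq_bound
    have : 2 ^ (m+1) = 2 * 2 ^ m := by ring
    have : (1:ℕ) ≤ 2 ^ m := Nat.pow_pos (by norm_num)
    omega
  have hl2 : 2 * (m+1) + 4 ≤ 2 ^ (m+3) := by
    have := Nat.lt_two_pow_self (n := m)
    have : 2 ^ (m+3) = 8 * 2 ^ m := by ring
    omega
  have e3 : 2 ^ (m+3) = 8 * 2 ^ m := by ring
  have e4 : 2 ^ (m+1) = 2 * 2 ^ m := by ring
  have e5 : 2 ^ (m+2) = 4 * 2 ^ m := by ring
  have hSA : SA (2 ^ (m+1+1) - 2) = 2 ^ (m+1+2) - 2*(m+1) - 4 := SA_full (m+1)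
  have hPqEq : Pq (m+1+1) (2 ^ (m+1)) = Pq (m+2) (2 ^ (m+1)) := rfl
  have e6 : 2 ^ (m+1+1) = 4 * 2 ^ m := by ring
  have e7 : 2 ^ (m+1+2) = 8 * 2 ^ m := by ring
  omega

lemma pow_lin : ∀ L, 8 ≤ L → 24 * L + 2 ≤ 2 ^ (L + 1) := by
  intro L hL
  induction L, hL using Nat.le_induction with
  | base => norm_num
  | succ L hL ih =>
    have : 2 ^ (L+1+1) = 2 * 2 ^ (L+1) := by ring
    omega

lemma SA_lower : ∀ L, 8 ≤ L → 23 * (2 ^ (L+1) - 2) ≤ 12 * SA (2 ^ (L+1) - 2) := by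
  intro L hL
  rw [SA_full L]
  have h1 := pow_lin L hL
  have e1 : 2 ^ (L+1) = 2 * 2 ^ L := by ring
  have e2 : 2 ^ (L+2) = 4 * 2 ^ L := by ring
  omega

lemma SA_upper (ℓ : ℕ) (hℓ : 1 ≤ ℓ) : 6 * SA (3 * 2 ^ ℓ - 1) ≤ 11 * (3 * 2 ^ ℓ - 1) := by
  have h := SA_B_bound ℓ hℓ
  have : (1:ℕ) ≤ 2 ^ ℓ := Nat.pow_pos (by norm_num)
  omega

end Carry11

/-- There exists a PCE language `H` over a 3-letter alphabet with exactly `2^ℓ`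
words of each length `ℓ` (hence local growth rate 2) whose carry propagation
`lim (1/N) ∑_{i<N} cp_H(i)` does not exist; moreover along the subsequence
`N(ℓ) = 3·2^ℓ - 1` the averages are eventually at most `11/6`. -/
theorem carry_stmt11 :
    ∃ H : Set (List (Fin 3)), PCE H ∧ (∀ ℓ : ℕ, uCount H ℓ = 2 ^ ℓ) ∧
      ∀ rep : ℕ → List (Fin 3), RadixEnum H rep →
        (¬ ∃ C : ℝ, Tendsto
            (fun N : ℕ => (∑ i ∈ Finset.range N, (Delta (rep i) (rep (i + 1)) : ℝ)) / N)
            atTop (nhds C)) ∧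
        (∀ᶠ ℓ : ℕ in atTop,
          (∑ i ∈ Finset.range (3 * 2 ^ ℓ - 1), (Delta (rep i) (rep (i + 1)) : ℝ)) /
              (3 * 2 ^ ℓ - 1 : ℝ) ≤ 11 / 6) := by
  classical
  refine ⟨Carry11.H, Carry11.H_pce, Carry11.H_uCount, ?_⟩
  intro rep hrep
  have hre : rep = Carry11.myrep := Carry11.rep_unique hrep
  subst hre
  have hsum : ∀ N : ℕ, (∑ i ∈ Finset.range N, (Delta (Carry11.myrep i) (Carry11.myrep (i + 1)) : ℝ))
      = (Carry11.SA N : ℝ) := by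
    intro N
    rw [Carry11.SA, Nat.cast_sum]
    rfl
  -- the eventual upper bound along N(ℓ) = 3·2^ℓ - 1
  have hupper : ∀ ℓ : ℕ, 1 ≤ ℓ →
      ((Carry11.SA (3 * 2 ^ ℓ - 1) : ℝ) / ((3 * 2 ^ ℓ - 1 : ℕ) : ℝ)) ≤ 11 / 6 := by
    intro ℓ hℓ
    have hpos : (0:ℕ) < 3 * 2 ^ ℓ - 1 := by
      have : (1:ℕ) ≤ 2 ^ ℓ := Nat.pow_pos (by norm_num)
      omega
    rw [div_le_div_iff₀ (by exact_mod_cast hpos) (by norm_num)]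
    have h := Carry11.SA_upper ℓ hℓ
    have : (Carry11.SA (3 * 2 ^ ℓ - 1) : ℝ) * 6 ≤ 11 * ((3 * 2 ^ ℓ - 1 : ℕ) : ℝ) := by
      exact_mod_cast (by omega : Carry11.SA (3 * 2 ^ ℓ - 1) * 6 ≤ 11 * (3 * 2 ^ ℓ - 1))
    linarith
  constructor
  · rintro ⟨C, hC⟩
    set avg : ℕ → ℝ := fun N : ℕ =>
      (∑ i ∈ Finset.range N, (Delta (Carry11.myrep i) (Carry11.myrep (i + 1)) : ℝ)) / N with havg
    -- subsequence 3*2^ℓ - 1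
    have hs1 : Tendsto (fun ℓ : ℕ => 3 * 2 ^ ℓ - 1) atTop atTop := by
      apply tendsto_atTop_mono (f := fun n : ℕ => n)
      · intro n
        have := Nat.lt_two_pow_self (n := n)
        omega
      · exact tendsto_id
    have hs2 : Tendsto (fun L : ℕ => 2 ^ (L+1) - 2) atTop atTop := by
      apply tendsto_atTop_mono (f := fun n : ℕ => n)
      · intro n
        have h1 := Nat.lt_two_pow_self (n := n)
        have h2 : 2 ^ (n+1) = 2 * 2 ^ n := by ring
        omega
      · exact tendsto_id
    have hC1 : Tendsto (fun ℓ : ℕ => avg (3 * 2 ^ ℓ - 1)) atTop (nhds C) := hC.comp hs1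
    have hC2 : Tendsto (fun L : ℕ => avg (2 ^ (L+1) - 2)) atTop (nhds C) := hC.comp hs2
    have hle : C ≤ 11 / 6 := by
      apply le_of_tendsto hC1
      filter_upwards [eventually_ge_atTop 1] with ℓ hℓ
      rw [havg]
      simp only
      rw [hsum]
      exact hupper ℓ hℓ
    have hge : (23 : ℝ) / 12 ≤ C := by
      apply ge_of_tendsto hC2
      filter_upwards [eventually_ge_atTop 8] with L hL
      rw [havg]
      simp only
      rw [hsum]
      have hpos : (0:ℕ) < 2 ^ (L+1) - 2 := by
        have : (2:ℕ) ≤ 2 ^ L := by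
          calc (2:ℕ) = 2 ^ 1 := rfl
            _ ≤ 2 ^ L := Nat.pow_le_pow_right (by norm_num) (by omega)
        have h2 : 2 ^ (L+1) = 2 * 2 ^ L := by ring
        omega
      rw [div_le_div_iff₀ (by norm_num) (by exact_mod_cast hpos)]
      have h := Carry11.SA_lower L hL
      exact_mod_cast (by omega : 23 * (2 ^ (L+1) - 2) ≤ Carry11.SA (2 ^ (L+1) - 2) * 12)
    linarith
  · filter_upwards [eventually_ge_atTop 1] with ℓ hℓ
    rw [hsum]
    have hcastden : ((3 * 2 ^ ℓ - 1 : ℕ) : ℝ) = (3 * 2 ^ ℓ - 1 : ℝ) := by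
      have h1 : (1:ℕ) ≤ 3 * 2 ^ ℓ := by
        have : (1:ℕ) ≤ 2 ^ ℓ := Nat.pow_pos (by norm_num)
        omega
      rw [Nat.cast_sub h1]
      push_cast
      ring
    rw [← hcastden]
    exact hupper ℓ hℓ
end
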